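/- arXiv:1502.00259 — 9 statements merged into one kernel-verified Lean document; each statement's English description precedes it below -/
import Mathlib

section
/- Let 𝒜 be a unital *-subalgebra of the algebra of d×d complex matrices (d finite) and let M_1, …, M_K be d×d complex matrices. Then ∑_{k=1}^K M_k† A M_k = A holds for every A ∈ 𝒜 if and only if ∑_{k=1}^K M_k† M_k = I and every M_k belongs to the commutant 𝒜′ = { B : AB = BA for all A ∈ 𝒜 }. -/
open Matrix

lemma aux_sum_conjTranspose_mul_self_eq_zero {d K : ℕ}
    (N : Fin K → Matrix (Fin d) (Fin d) ℂ)
    (h : ∑ k, (N k)ᴴ * N k = 0) : ∀ k, N k = 0 := by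
  intro k
  ext i j
  have hjj := congrFun (congrFun h j) j
  simp only [Matrix.sum_apply, Matrix.mul_apply, Matrix.conjTranspose_apply,
    Matrix.zero_apply] at hjj
  have hre : ∑ k, ∑ i, Complex.normSq (N k i j) = 0 := by
    have : ((∑ k, ∑ i, (Complex.normSq (N k i j) : ℂ)) : ℂ) = 0 := by
      rw [← hjj]
      congr 1; ext k; congr 1; ext i
      rw [Complex.normSq_eq_conj_mul_self]; rfl
    exact_mod_cast this
  have hnonneg : ∀ k ∈ Finset.univ, (0:ℝ) ≤ ∑ i, Complex.normSq (N k i j) :=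
    fun k _ => Finset.sum_nonneg fun i _ => Complex.normSq_nonneg _
  have h1 := (Finset.sum_eq_zero_iff_of_nonneg hnonneg).mp hre k (Finset.mem_univ k)
  have h2 := (Finset.sum_eq_zero_iff_of_nonneg
    (fun i _ => Complex.normSq_nonneg (N k i j))).mp h1 i (Finset.mem_univ i)
  simpa [Matrix.zero_apply] using Complex.normSq_eq_zero.mp h2

/-- **Lindblad's lemma.** For a unital *-subalgebra `𝒜` of the `d × d` complex matrices and
matrices `M_1, …, M_K`, one has `∑ k, (M k)ᴴ * A * M k = A` for every `A ∈ 𝒜` if and only if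
`∑ k, (M k)ᴴ * M k = 1` and every `M k` lies in the commutant of `𝒜`. -/
theorem stmt_0 {d K : ℕ}
    (𝒜 : StarSubalgebra ℂ (Matrix (Fin d) (Fin d) ℂ))
    (M : Fin K → Matrix (Fin d) (Fin d) ℂ) :
    (∀ A ∈ 𝒜, ∑ k, (M k)ᴴ * A * M k = A) ↔
      ((∑ k, (M k)ᴴ * M k = 1) ∧ ∀ k, ∀ A ∈ 𝒜, A * M k = M k * A) := by
  constructor
  · intro h
    have h1 : ∑ k, (M k)ᴴ * M k = 1 := by
      have := h 1 (one_mem 𝒜)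
      simpa using this
    refine ⟨h1, ?_⟩
    intro k A hA
    have hAs : Aᴴ ∈ 𝒜 := by
      have := 𝒜.star_mem' hA
      simpa [Matrix.star_eq_conjTranspose] using this
    have hAA : Aᴴ * A ∈ 𝒜 := mul_mem hAs hA
    have expand : ∀ k, ((A * M k - M k * A)ᴴ) * (A * M k - M k * A) =
        (M k)ᴴ * (Aᴴ * A) * (M k) - ((M k)ᴴ * Aᴴ * (M k)) * A
          - Aᴴ * ((M k)ᴴ * A * (M k)) + Aᴴ * ((M k)ᴴ * (M k)) * A := by
      intro k
      simp only [Matrix.conjTranspose_sub, Matrix.conjTranspose_mul]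
      noncomm_ring
    have hsum : ∑ k, ((A * M k - M k * A)ᴴ) * (A * M k - M k * A) = 0 := by
      calc ∑ k, ((A * M k - M k * A)ᴴ) * (A * M k - M k * A)
          = (∑ k, (M k)ᴴ * (Aᴴ * A) * (M k)) - (∑ k, (M k)ᴴ * Aᴴ * (M k)) * A
            - Aᴴ * (∑ k, (M k)ᴴ * A * (M k)) + Aᴴ * (∑ k, (M k)ᴴ * (M k)) * A := by
            simp only [expand, Finset.sum_sub_distrib, Finset.sum_add_distrib,
              Finset.sum_mul, Finset.mul_sum]
        _ = Aᴴ * A - Aᴴ * A - Aᴴ * A + Aᴴ * A := by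
            rw [h (Aᴴ * A) hAA, h Aᴴ hAs, h A hA, h1, mul_one]
        _ = 0 := by simp
    have := aux_sum_conjTranspose_mul_self_eq_zero _ hsum k
    exact sub_eq_zero.mp this
  · rintro ⟨h1, h2⟩ A hA
    calc ∑ k, (M k)ᴴ * A * M k = ∑ k, (M k)ᴴ * (M k * A) := by
          congr 1; ext k; rw [← h2 k A hA]; noncomm_ring
      _ = (∑ k, (M k)ᴴ * M k) * A := by rw [Finset.sum_mul]; simp [Matrix.mul_assoc]
      _ = A := by rw [h1, one_mul]
end

section
/- Let ℳ(ρ) = ∑_{k=1}^K M_k ρ M_k† be a quantum channel (∑_k M_k† M_k = I) on d×d complex matrices and let H be a Hermitian d×d matrix with spectral projections P_E. Then ∑_k M_k† H^n M_k = H^n for every natural number n if and only if Tr[P_E ℳ(ρ)] = Tr[P_E ρ] for every d×d matrix ρ and every eigenvalue E of H. -/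
open Matrix Polynomial

/-- If `∑ j, v j ^ n • D j = 0` for all `n` and `v` is injective, then each `D j = 0`
(Vandermonde argument via Lagrange interpolation). -/
lemma vander_aux {d : ℕ} {ι : Type} [Fintype ι] [DecidableEq ι]
    (v : ι → ℂ) (hv : Function.Injective v)
    (D : ι → Matrix (Fin d) (Fin d) ℂ)
    (h : ∀ n : ℕ, ∑ j, v j ^ n • D j = 0) (i : ι) : D i = 0 := by
  set p : ℂ[X] := Lagrange.basis Finset.univ v i with hp
  have key : ∑ n ∈ Finset.range (p.natDegree + 1), p.coeff n • (∑ j, v j ^ n • D j)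
      = ∑ j, (p.eval (v j)) • D j := by
    simp_rw [Finset.smul_sum]
    rw [Finset.sum_comm]
    refine Finset.sum_congr rfl fun j _ => ?_
    rw [eval_eq_sum_range, Finset.sum_smul]
    refine Finset.sum_congr rfl fun n _ => ?_
    rw [smul_smul]
  have h0 : ∑ j, (p.eval (v j)) • D j = 0 := by
    rw [← key]
    simp [h]
  rw [Finset.sum_eq_single i] at h0
  · rwa [hp, Lagrange.eval_basis_self (hv.injOn) (Finset.mem_univ i), one_smul] at h0
  · intro j _ hj
    rw [hp, Lagrange.eval_basis_of_ne (Ne.symm hj) (Finset.mem_univ j), zero_smul]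
  · simp

/-- If `Tr[Aρ] = Tr[Bρ]` for all `ρ`, then `A = B`. -/
lemma trace_eq_imp {d : ℕ} (A B : Matrix (Fin d) (Fin d) ℂ)
    (h : ∀ ρ, (A * ρ).trace = (B * ρ).trace) : A = B := by
  ext i j
  have := h (Matrix.single j i 1)
  simpa [Matrix.trace, Matrix.diag, Matrix.mul_apply, Matrix.single,
    ite_and, mul_ite, Finset.sum_ite_eq, Finset.sum_ite_eq'] using this

/-- For a quantum channel `ℳ(ρ) = ∑ k, M k * ρ * (M k)ᴴ` (with `∑ k, (M k)ᴴ * M k = 1`) and a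
Hermitian matrix `H` with spectral decomposition `H = ∑ i, E i • P i`, the channel preserves all
moments of `H` (`∑ k, (M k)ᴴ * H ^ n * M k = H ^ n` for all `n`) if and only if it preserves the
energy distribution: `Tr[P i * ℳ(ρ)] = Tr[P i * ρ]` for every state `ρ` and every eigenvalue. -/
theorem stmt_2 {d K : ℕ} {ι : Type} [Fintype ι] [DecidableEq ι]
    (H : Matrix (Fin d) (Fin d) ℂ) (hH : H.IsHermitian)
    (E : ι → ℝ) (hE : Function.Injective E)
    (P : ι → Matrix (Fin d) (Fin d) ℂ)
    (hHerm : ∀ i, (P i).IsHermitian)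
    (hIdem : ∀ i, P i * P i = P i)
    (hOrth : ∀ i j, i ≠ j → P i * P j = 0)
    (hSum : ∑ i, P i = 1)
    (hSpec : H = ∑ i, (E i : ℂ) • P i)
    (M : Fin K → Matrix (Fin d) (Fin d) ℂ)
    (hTP : ∑ k, (M k)ᴴ * M k = 1) :
    (∀ n : ℕ, ∑ k, (M k)ᴴ * H ^ n * M k = H ^ n) ↔
      (∀ (ρ : Matrix (Fin d) (Fin d) ℂ) (i : ι),
        Matrix.trace (P i * ∑ k, M k * ρ * (M k)ᴴ) = Matrix.trace (P i * ρ)) := by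
  have hvE : Function.Injective (fun i => (E i : ℂ)) := fun a b hab => by
    exact hE (Complex.ofReal_injective hab)
  -- powers of H
  have hpow : ∀ n : ℕ, H ^ n = ∑ i, ((E i : ℂ)) ^ n • P i := by
    intro n
    induction n with
    | zero => simp [hSum]
    | succ n ih =>
      rw [pow_succ, ih, hSpec, Finset.sum_mul]
      refine Finset.sum_congr rfl fun i _ => ?_
      rw [Finset.mul_sum, Finset.sum_eq_single i]
      · rw [smul_mul_assoc, mul_smul_comm, hIdem, smul_smul, pow_succ]
      · intro j _ hj
        rw [smul_mul_assoc, mul_smul_comm, hOrth i j (Ne.symm hj), smul_zero, smul_zero]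
      · simp
  set Q : ι → Matrix (Fin d) (Fin d) ℂ := fun i => ∑ k, (M k)ᴴ * P i * M k with hQ
  have hchan : ∀ n : ℕ, ∑ k, (M k)ᴴ * H ^ n * M k = ∑ i, ((E i : ℂ)) ^ n • Q i := by
    intro n
    simp_rw [hpow, Finset.mul_sum, Finset.sum_mul, mul_smul_comm, smul_mul_assoc, hQ,
      Finset.smul_sum]
    exact Finset.sum_comm
  -- trace identity: Tr[P i * ℳ(ρ)] = Tr[Q i * ρ]
  have htr : ∀ (ρ : Matrix (Fin d) (Fin d) ℂ) (i : ι),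
      (P i * ∑ k, M k * ρ * (M k)ᴴ).trace = (Q i * ρ).trace := by
    intro ρ i
    rw [Finset.mul_sum, trace_sum, hQ]
    simp only [Finset.sum_mul, trace_sum]
    refine Finset.sum_congr rfl fun k _ => ?_
    rw [show P i * (M k * ρ * (M k)ᴴ) = (P i * M k * ρ) * (M k)ᴴ by simp [mul_assoc],
      Matrix.trace_mul_comm, ← mul_assoc, ← mul_assoc]
  constructor
  · intro hmom ρ i
    -- from moments get Q i = P i
    have hQP : ∀ i, Q i = P i := by
      have h0 : ∀ n : ℕ, ∑ j, ((E j : ℂ)) ^ n • (Q j - P j) = 0 := by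
        intro n
        simp_rw [smul_sub, Finset.sum_sub_distrib]
        rw [← hchan n, hmom n, hpow n, sub_self]
      intro j
      have := vander_aux _ hvE _ h0 j
      exact sub_eq_zero.mp this
    rw [htr ρ i, hQP i]
  · intro hdist n
    have hQP : ∀ i, Q i = P i := by
      intro i
      refine trace_eq_imp _ _ fun ρ => ?_
      rw [← htr ρ i, hdist ρ i]
    rw [hchan n, hpow n]
    exact Finset.sum_congr rfl fun i _ => by rw [hQP i]
end

section
/- Let H be a Hermitian operator on ℂ^d and let V : ℂ^d → ℂ^d ⊗ ℂ^K be an isometry (V†V = I) satisfying the intertwining relation V H = (H ⊗ I_K) V. Then for every unit vector φ₀ ∈ ℂ^K there exists a unitary U on ℂ^d ⊗ ℂ^K such that U(ψ ⊗ φ₀) = Vψ for every ψ ∈ ℂ^d and U (H ⊗ I_K) = (H ⊗ I_K) U. -/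
open Matrix LinearMap
open scoped InnerProductSpace
open scoped Kronecker

set_option maxHeartbeats 1000000

section Abstract
variable {E : Type*} [NormedAddCommGroup E] [InnerProductSpace ℂ E] [FiniteDimensional ℂ E]

lemma lin_partial_isometry_extend (f : E →ₗ[ℂ] E)
    (hPP : (adjoint f ∘ₗ f) ∘ₗ (adjoint f ∘ₗ f) = adjoint f ∘ₗ f) :
    ∃ u : E →ₗ[ℂ] E, adjoint u ∘ₗ u = LinearMap.id ∧ u ∘ₗ (adjoint f ∘ₗ f) = f := by
  classical
  set P : E →ₗ[ℂ] E := adjoint f ∘ₗ f with hP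
  have hPPx : ∀ x : E, P (P x) = P x :=
    fun x => congrFun (congrArg DFunLike.coe hPP) x
  have hPadj : adjoint P = P := by
    rw [hP, adjoint_comp, adjoint_adjoint]
  have hPxin : ∀ x : E, P x = adjoint f (f x) := fun x => rfl
  clear_value P
  -- f ∘ P = f
  have hfP : ∀ x : E, f (P x) = f x := by
    intro x
    have h0 : ⟪f (P x) - f x, f (P x) - f x⟫_ℂ = 0 := by
      have he : f (P x) - f x = f (P x - x) := by rw [map_sub]
      rw [he]
      have h2 : ⟪f (P x - x), f (P x - x)⟫_ℂ = ⟪adjoint f (f (P x - x)), P x - x⟫_ℂ := by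
        rw [adjoint_inner_left]
      rw [h2, ← hPxin, map_sub, hPPx, sub_self, inner_zero_left]
    exact sub_eq_zero.mp (inner_self_eq_zero.mp h0)
  set S : Submodule ℂ E := LinearMap.ker f with hS
  set T : Submodule ℂ E := LinearMap.ker (adjoint f) with hT
  have hSmem : ∀ x : E, x ∈ S ↔ f x = 0 := by
    intro x; rw [hS, LinearMap.mem_ker]
  have hTmem : ∀ x : E, x ∈ T ↔ adjoint f x = 0 := by
    intro x; rw [hT, LinearMap.mem_ker]
  have hdim : Module.finrank ℂ S = Module.finrank ℂ T := by
    have hTorth : T = (LinearMap.range f)ᗮ := by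
      ext x
      rw [hTmem]
      constructor
      · intro hx
        rw [Submodule.mem_orthogonal]
        rintro u ⟨z, rfl⟩
        rw [← adjoint_inner_right, hx, inner_zero_right]
      · intro hx
        have h0 : ⟪adjoint f x, adjoint f x⟫_ℂ = 0 := by
          rw [adjoint_inner_left]
          have h3 := (Submodule.mem_orthogonal _ x).mp hx (f (adjoint f x)) ⟨adjoint f x, rfl⟩
          rw [← inner_conj_symm, h3, map_zero]
        exact inner_self_eq_zero.mp h0
    have h1 : Module.finrank ℂ (LinearMap.range f) + Module.finrank ℂ S
        = Module.finrank ℂ E := by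
      rw [hS]; exact LinearMap.finrank_range_add_finrank_ker f
    have h2 : Module.finrank ℂ (LinearMap.range f)
        + Module.finrank ℂ (LinearMap.range f)ᗮ = Module.finrank ℂ E :=
      Submodule.finrank_add_finrank_orthogonal (K := LinearMap.range f)
    rw [hTorth]
    omega
  clear_value S T
  obtain ⟨W⟩ : Nonempty (S ≃ₗᵢ[ℂ] T) :=
    ⟨(stdOrthonormalBasis ℂ S).repr.trans
      ((stdOrthonormalBasis ℂ T).reindex (finCongr hdim.symm)).repr.symm⟩
  obtain ⟨C, hCx⟩ : ∃ C : E →ₗ[ℂ] E,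
      ∀ x : E, C x = ((W (S.orthogonalProjectionOnto x) : T) : E) :=
    ⟨T.subtype ∘ₗ W.toLinearEquiv.toLinearMap ∘ₗ (S.orthogonalProjectionOnto).toLinearMap,
      fun x => rfl⟩
  have hprojS : ∀ x : E, ((S.orthogonalProjectionOnto x : S) : E) = x - P x := by
    intro x
    have hmem : x - P x ∈ S := by
      rw [hSmem, map_sub, hfP, sub_self]
    have horth : x - (x - P x) ∈ Sᗮ := by
      rw [Submodule.mem_orthogonal]
      intro s hs
      rw [sub_sub_cancel, hPxin, adjoint_inner_right, (hSmem s).mp hs, inner_zero_left]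
    rw [← Submodule.starProjection_apply, Submodule.eq_starProjection_of_mem_orthogonal hmem horth]
  -- key identities
  have hCmem : ∀ x : E, C x ∈ T := by
    intro x
    rw [hCx]
    exact ((W (S.orthogonalProjectionOnto x)) : T).2
  have hfC : adjoint f ∘ₗ C = 0 := by
    apply LinearMap.ext
    intro x
    have hx := (hTmem _).mp (hCmem x)
    simpa using hx
  have hCf : adjoint C ∘ₗ f = 0 := by
    have h4 := congrArg LinearMap.adjoint hfC
    rwa [adjoint_comp, adjoint_adjoint, map_zero] at h4
  have key : ∀ a b : S, ⟪((W a : T) : E), ((W b : T) : E)⟫_ℂ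
      = ⟪(a : E), (b : E)⟫_ℂ := by
    intro a b
    rw [← Submodule.coe_inner, LinearIsometryEquiv.inner_map_map, Submodule.coe_inner]
  have hCC : adjoint C ∘ₗ C = LinearMap.id - P := by
    apply LinearMap.ext
    intro x
    apply ext_inner_right ℂ
    intro y
    rw [LinearMap.comp_apply, adjoint_inner_left, hCx, hCx, key, hprojS, hprojS]
    have hPy : ⟪x - P x, P y⟫_ℂ = 0 := by
      rw [inner_sub_left]
      have h5 : ⟪P x, P y⟫_ℂ = ⟪x, P y⟫_ℂ := by
        conv_lhs => rw [← hPadj]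
        rw [adjoint_inner_left, hPadj, hPPx]
      rw [h5, sub_self]
    rw [inner_sub_right, hPy, sub_zero]
    simp
  have hCP : C ∘ₗ P = 0 := by
    apply LinearMap.ext
    intro x
    rw [LinearMap.comp_apply, hCx]
    have h6 : S.orthogonalProjectionOnto (P x) = 0 := by
      apply Subtype.ext
      rw [hprojS, hPPx, sub_self, Submodule.coe_zero]
    rw [h6, map_zero, Submodule.coe_zero, LinearMap.zero_apply]
  -- assemble
  refine ⟨f + C, ?_, ?_⟩
  · rw [map_add, add_comp, comp_add, comp_add, hfC, hCC, hCf, ← hP]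
    abel
  · rw [add_comp, hCP, add_zero]
    apply LinearMap.ext
    intro x
    exact hfP x

end Abstract

section PerBlock
variable {n : Type*} [Fintype n] [DecidableEq n]

lemma aux_toEuclideanLin_mul (A B : Matrix n n ℂ) :
    Matrix.toEuclideanLin (A * B) = Matrix.toEuclideanLin A ∘ₗ Matrix.toEuclideanLin B := by
  rw [Matrix.toEuclideanLin_eq_toLin,
    Matrix.toLin_mul (PiLp.basisFun 2 ℂ n) (PiLp.basisFun 2 ℂ n) (PiLp.basisFun 2 ℂ n)]

lemma aux_toEuclideanLin_one :
    Matrix.toEuclideanLin (1 : Matrix n n ℂ) = LinearMap.id := by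
  rw [Matrix.toEuclideanLin_eq_toLin, Matrix.toLin_one]

lemma partial_isometry_extend (Z : Matrix n n ℂ) (h : Zᴴ * Z * (Zᴴ * Z) = Zᴴ * Z) :
    ∃ U : Matrix n n ℂ, Uᴴ * U = 1 ∧ U * (Zᴴ * Z) = Z := by
  classical
  have hadj : Matrix.toEuclideanLin Zᴴ = adjoint (Matrix.toEuclideanLin Z) :=
    Matrix.toEuclideanLin_conjTranspose_eq_adjoint Z
  obtain ⟨u, hu1, hu2⟩ := lin_partial_isometry_extend (Matrix.toEuclideanLin Z) (by
    have := congrArg Matrix.toEuclideanLin h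
    simpa [aux_toEuclideanLin_mul, hadj, LinearMap.comp_assoc] using this)
  refine ⟨Matrix.toEuclideanLin.symm u, ?_, ?_⟩
  · apply Matrix.toEuclideanLin.injective
    rw [aux_toEuclideanLin_mul, aux_toEuclideanLin_one,
      Matrix.toEuclideanLin_conjTranspose_eq_adjoint, LinearEquiv.apply_symm_apply]
    exact hu1
  · apply Matrix.toEuclideanLin.injective
    rw [aux_toEuclideanLin_mul, aux_toEuclideanLin_mul, hadj, LinearEquiv.apply_symm_apply,
      ← LinearMap.comp_assoc]
    exact hu2

end PerBlock

section Block
variable {ι : Type*} [Fintype ι] [DecidableEq ι]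

def IsBlocked (μ : ι → ℝ) (X : Matrix ι ι ℂ) : Prop :=
  ∀ p q, μ p ≠ μ q → X p q = 0

lemma blocked_mul {μ : ι → ℝ} {X Y : Matrix ι ι ℂ} (hX : IsBlocked μ X)
    (hY : IsBlocked μ Y) : IsBlocked μ (X * Y) := by
  intro p q h
  rw [Matrix.mul_apply]
  apply Finset.sum_eq_zero
  intro r _
  by_cases hr : μ p = μ r
  · rw [hY r q (by rw [← hr]; exact h), mul_zero]
  · rw [hX p r hr, zero_mul]

lemma blocked_conjTranspose {μ : ι → ℝ} {X : Matrix ι ι ℂ} (hX : IsBlocked μ X) :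
    IsBlocked μ Xᴴ := fun p q h => by
  rw [Matrix.conjTranspose_apply, hX q p (Ne.symm h), star_zero]

lemma blocked_one {μ : ι → ℝ} : IsBlocked μ (1 : Matrix ι ι ℂ) := fun p q h =>
  Matrix.one_apply_ne (by rintro rfl; exact h rfl)

def blk (μ : ι → ℝ) (c : ℝ) (X : Matrix ι ι ℂ) :
    Matrix {p : ι // μ p = c} {p : ι // μ p = c} ℂ :=
  X.submatrix Subtype.val Subtype.val

lemma blk_conjTranspose (μ : ι → ℝ) (c : ℝ) (X : Matrix ι ι ℂ) :
    blk μ c Xᴴ = (blk μ c X)ᴴ := rfl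

lemma blk_one (μ : ι → ℝ) (c : ℝ) : blk μ c (1 : Matrix ι ι ℂ) = 1 := by
  ext p q
  rcases p with ⟨p, hp⟩
  rcases q with ⟨q, hq⟩
  simp only [blk, Matrix.submatrix_apply, Matrix.one_apply, Subtype.mk.injEq]

lemma blk_mul {μ : ι → ℝ} (c : ℝ) {X Y : Matrix ι ι ℂ} (hY : IsBlocked μ Y) :
    blk μ c (X * Y) = blk μ c X * blk μ c Y := by
  ext p q
  rcases p with ⟨p, hp⟩
  rcases q with ⟨q, hq⟩
  simp only [blk, Matrix.submatrix_apply, Matrix.mul_apply]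
  rw [← Finset.sum_subtype (Finset.univ.filter (fun r => μ r = c))
    (p := fun r => μ r = c) (by simp) (fun r => X p r * Y r q)]
  rw [Finset.sum_filter_of_ne]
  intro r _ hne
  by_contra hrc
  apply hne
  have : Y r q = 0 := hY r q (by rw [hq]; exact hrc)
  rw [this, mul_zero]

lemma blocked_ext {μ : ι → ℝ} {X Y : Matrix ι ι ℂ} (hX : IsBlocked μ X)
    (hY : IsBlocked μ Y) (h : ∀ c, blk μ c X = blk μ c Y) : X = Y := by
  ext p q
  by_cases hpq : μ p = μ q
  · exact congrFun (congrFun (h (μ q)) ⟨p, hpq⟩) ⟨q, rfl⟩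
  · rw [hX p q hpq, hY p q hpq]

lemma blocked_partial_isometry_extend (μ : ι → ℝ) (Z : Matrix ι ι ℂ)
    (hZ : IsBlocked μ Z) (h : Zᴴ * Z * (Zᴴ * Z) = Zᴴ * Z) :
    ∃ U : Matrix ι ι ℂ, Uᴴ * U = 1 ∧ U * (Zᴴ * Z) = Z ∧ IsBlocked μ U := by
  classical
  have hZZ : IsBlocked μ (Zᴴ * Z) := blocked_mul (blocked_conjTranspose hZ) hZ
  have hblkZZ : ∀ c, blk μ c (Zᴴ * Z) = (blk μ c Z)ᴴ * blk μ c Z := by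
    intro c
    rw [blk_mul c hZ, blk_conjTranspose]
  have hblock : ∀ c : ℝ, ∃ u : Matrix {p : ι // μ p = c} {p : ι // μ p = c} ℂ,
      uᴴ * u = 1 ∧ u * ((blk μ c Z)ᴴ * blk μ c Z) = blk μ c Z := by
    intro c
    apply partial_isometry_extend
    rw [← hblkZZ, ← blk_mul c hZZ, h]
  choose u hu1 hu2 using hblock
  set U : Matrix ι ι ℂ :=
    Matrix.of (fun p q => if hpq : μ q = μ p then u (μ p) ⟨p, rfl⟩ ⟨q, hpq⟩ else 0) with hU
  have hUblk : IsBlocked μ U := by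
    intro p q hpq
    exact dif_neg (fun hh => hpq hh.symm)
  have hblkU : ∀ c, blk μ c U = u c := by
    intro c
    ext p q
    rcases p with ⟨p, hp⟩
    rcases q with ⟨q, hq⟩
    subst hp
    simp only [blk, Matrix.submatrix_apply, hU, Matrix.of_apply]
    rw [dif_pos hq]
  refine ⟨U, ?_, ?_, hUblk⟩
  · apply blocked_ext (blocked_mul (blocked_conjTranspose hUblk) hUblk) blocked_one
    intro c
    rw [blk_mul c hUblk, blk_conjTranspose, hblkU, hu1, blk_one]
  · apply blocked_ext (blocked_mul hUblk hZZ) hZ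
    intro c
    rw [blk_mul c hZZ, hblkU, hblkZZ, hu2]

end Block

open scoped Kronecker

/-- Every isometry `V : ℂ^d → ℂ^d ⊗ ℂ^K` intertwining a Hermitian `H` with `H ⊗ I_K` extends,
for any unit vector `φ₀ ∈ ℂ^K`, to a unitary `U` on `ℂ^d ⊗ ℂ^K` with `U (ψ ⊗ φ₀) = V ψ` for all
`ψ` and `U (H ⊗ I_K) = (H ⊗ I_K) U`. -/
theorem stmt_3 {d K : ℕ}
    (H : Matrix (Fin d) (Fin d) ℂ) (hH : H.IsHermitian)
    (V : Matrix (Fin d × Fin K) (Fin d) ℂ)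
    (hIso : Vᴴ * V = 1)
    (hInt : V * H = (H ⊗ₖ (1 : Matrix (Fin K) (Fin K) ℂ)) * V)
    (φ₀ : Fin K → ℂ) (hφ₀ : star φ₀ ⬝ᵥ φ₀ = 1) :
    ∃ U : Matrix (Fin d × Fin K) (Fin d × Fin K) ℂ,
      Uᴴ * U = 1 ∧ U * Uᴴ = 1 ∧
      (∀ ψ : Fin d → ℂ, U *ᵥ (fun p => ψ p.1 * φ₀ p.2) = V *ᵥ ψ) ∧
      U * (H ⊗ₖ (1 : Matrix (Fin K) (Fin K) ℂ)) =
        (H ⊗ₖ (1 : Matrix (Fin K) (Fin K) ℂ)) * U := by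
  classical
  set M : Matrix (Fin d × Fin K) (Fin d × Fin K) ℂ := H ⊗ₖ (1 : Matrix (Fin K) (Fin K) ℂ)
    with hMdef
  have hM : M.IsHermitian := by
    rw [Matrix.IsHermitian]
    ext p q
    simp only [Matrix.conjTranspose_apply, hMdef, Matrix.kroneckerMap_apply, star_mul',
      Matrix.one_apply]
    rw [← Matrix.conjTranspose_apply, hH.eq]
    by_cases hk : q.2 = p.2
    · simp [hk]
    · rw [if_neg (fun h : p.2 = q.2 => hk h.symm), if_neg hk, star_zero]
  -- the embedding ψ ↦ ψ ⊗ φ₀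
  set A : Matrix (Fin d × Fin K) (Fin d) ℂ :=
    Matrix.of (fun p j => if p.1 = j then φ₀ p.2 else 0) with hAdef
  have hAA : Aᴴ * A = 1 := by
    ext j l
    simp only [Matrix.mul_apply, Matrix.conjTranspose_apply, hAdef, Matrix.of_apply,
      Fintype.sum_prod_type, Matrix.one_apply]
    by_cases hjl : j = l
    · subst hjl
      simp only [if_pos rfl]
      rw [Finset.sum_eq_single j]
      · simpa [dotProduct] using hφ₀
      · intro i _ hij; simp [hij]
      · simp
    · simp only [if_neg hjl]
      apply Finset.sum_eq_zero
      intro i _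
      by_cases hij : i = j
      · subst hij; simp [fun h : i = l => hjl h]
      · simp [hij]
  have hMA : M * A = A * H := by
    ext p j
    rcases p with ⟨i, k⟩
    simp only [Matrix.mul_apply, hMdef, hAdef, Matrix.kroneckerMap_apply, Matrix.of_apply,
      Fintype.sum_prod_type, Matrix.one_apply, mul_ite, mul_zero, ite_mul, zero_mul]
    rw [Finset.sum_comm]
    simp [Finset.sum_ite_eq, Finset.sum_ite_eq', mul_comm]
  have hPA : (A * Aᴴ) * A = A := by
    rw [Matrix.mul_assoc, hAA, Matrix.mul_one]
  -- the partial isometry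
  set Z₀ : Matrix (Fin d × Fin K) (Fin d × Fin K) ℂ := V * Aᴴ with hZ₀def
  have hAHM : Aᴴ * M = H * Aᴴ := by
    have h7 := congrArg Matrix.conjTranspose hMA
    rw [Matrix.conjTranspose_mul, Matrix.conjTranspose_mul, hM.eq, hH.eq] at h7
    exact h7
  have hZ₀M : Z₀ * M = M * Z₀ := by
    rw [hZ₀def, Matrix.mul_assoc, hAHM, ← Matrix.mul_assoc, hInt, Matrix.mul_assoc]
  have hZ₀Z₀ : Z₀ᴴ * Z₀ = A * Aᴴ := by
    rw [hZ₀def, Matrix.conjTranspose_mul, Matrix.conjTranspose_conjTranspose,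
      Matrix.mul_assoc, ← Matrix.mul_assoc Vᴴ, hIso, Matrix.one_mul]
  -- diagonalize M
  set W : Matrix (Fin d × Fin K) (Fin d × Fin K) ℂ := ↑hM.eigenvectorUnitary with hWdef
  have hW1 : Wᴴ * W = 1 := by
    rw [← Matrix.star_eq_conjTranspose]
    exact Unitary.star_mul_self_of_mem (hM.eigenvectorUnitary).2
  have hW2 : W * Wᴴ = 1 := by
    rw [← Matrix.star_eq_conjTranspose]
    exact Unitary.mul_star_self_of_mem (hM.eigenvectorUnitary).2
  set μ : Fin d × Fin K → ℝ := hM.eigenvalues with hμdef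
  set D : Matrix (Fin d × Fin K) (Fin d × Fin K) ℂ :=
    Matrix.diagonal (fun p => (μ p : ℂ)) with hDdef
  have hspec : M = W * D * Wᴴ := by
    have := hM.spectral_theorem
    rw [← Matrix.star_eq_conjTranspose]
    exact this
  have hWD : W * D = M * W := by
    rw [hspec, Matrix.mul_assoc, Matrix.mul_assoc, hW1, Matrix.mul_one]
  have hDW : D * Wᴴ = Wᴴ * M := by
    rw [hspec, ← Matrix.mul_assoc, ← Matrix.mul_assoc, hW1, Matrix.one_mul]
  set Z : Matrix (Fin d × Fin K) (Fin d × Fin K) ℂ := Wᴴ * Z₀ * W with hZdef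
  have hZD : Z * D = D * Z := by
    rw [hZdef,
      show Wᴴ * Z₀ * W * D = Wᴴ * Z₀ * (W * D) from by simp only [Matrix.mul_assoc], hWD,
      show Wᴴ * Z₀ * (M * W) = Wᴴ * (Z₀ * M) * W from by simp only [Matrix.mul_assoc], hZ₀M,
      show Wᴴ * (M * Z₀) * W = (Wᴴ * M) * (Z₀ * W) from by simp only [Matrix.mul_assoc],
      ← hDW]
    simp only [Matrix.mul_assoc]
  have hZblk : IsBlocked μ Z := by
    intro p q hpq
    have h8 := congrFun (congrFun hZD p) q
    rw [hDdef] at h8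
    rw [Matrix.mul_diagonal, Matrix.diagonal_mul] at h8
    have h9 : Z p q * ((μ q : ℂ) - (μ p : ℂ)) = 0 := by
      rw [mul_sub, h8, mul_comm, sub_self]
    rcases mul_eq_zero.mp h9 with h10 | h10
    · exact h10
    · exfalso
      apply hpq
      have := sub_eq_zero.mp h10
      exact_mod_cast this.symm
  have hZZ : Zᴴ * Z = Wᴴ * (A * Aᴴ) * W := by
    rw [hZdef, Matrix.conjTranspose_mul, Matrix.conjTranspose_mul,
      Matrix.conjTranspose_conjTranspose]
    rw [show Wᴴ * (Z₀ᴴ * W) * (Wᴴ * Z₀ * W) = Wᴴ * Z₀ᴴ * (W * Wᴴ) * Z₀ * W by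
      simp only [Matrix.mul_assoc], hW2, Matrix.mul_one,
      show Wᴴ * Z₀ᴴ * Z₀ * W = Wᴴ * (Z₀ᴴ * Z₀) * W by simp only [Matrix.mul_assoc], hZ₀Z₀]
  have hpi : Zᴴ * Z * (Zᴴ * Z) = Zᴴ * Z := by
    rw [hZZ, show Wᴴ * (A * Aᴴ) * W * (Wᴴ * (A * Aᴴ) * W)
        = Wᴴ * (A * Aᴴ) * (W * Wᴴ) * (A * Aᴴ) * W by simp only [Matrix.mul_assoc], hW2,
      Matrix.mul_one, show Wᴴ * (A * Aᴴ) * (A * Aᴴ) * W = Wᴴ * ((A * Aᴴ) * A * Aᴴ) * W by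
        simp only [Matrix.mul_assoc], hPA]
  obtain ⟨U₁, hU₁1, hU₁2, hU₁blk⟩ := blocked_partial_isometry_extend μ Z hZblk hpi
  have hU₁D : U₁ * D = D * U₁ := by
    ext p q
    rw [hDdef, Matrix.mul_diagonal, Matrix.diagonal_mul]
    by_cases hpq : μ p = μ q
    · rw [hpq, mul_comm]
    · rw [hU₁blk p q hpq, mul_zero, zero_mul]
  set U : Matrix (Fin d × Fin K) (Fin d × Fin K) ℂ := W * U₁ * Wᴴ with hUdef
  have hUU : Uᴴ * U = 1 := by
    rw [hUdef, Matrix.conjTranspose_mul, Matrix.conjTranspose_mul,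
      Matrix.conjTranspose_conjTranspose]
    rw [show W * (U₁ᴴ * Wᴴ) * (W * U₁ * Wᴴ) = W * (U₁ᴴ * ((Wᴴ * W) * (U₁ * Wᴴ))) from by
      simp only [Matrix.mul_assoc], hW1, Matrix.one_mul, ← Matrix.mul_assoc U₁ᴴ U₁ Wᴴ,
      hU₁1, Matrix.one_mul, hW2]
  have hUM : U * M = M * U := by
    rw [hUdef, show W * U₁ * Wᴴ * M = W * (U₁ * (Wᴴ * M)) from by simp only [Matrix.mul_assoc],
      ← hDW, ← Matrix.mul_assoc U₁ D Wᴴ, hU₁D, Matrix.mul_assoc D U₁ Wᴴ,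
      ← Matrix.mul_assoc W D, hWD]
    simp only [Matrix.mul_assoc]
  have hUP : U * (A * Aᴴ) = Z₀ := by
    have e1 : U * (A * Aᴴ) = W * (U₁ * (Zᴴ * Z)) * Wᴴ := by
      rw [hZZ, hUdef]
      rw [show W * U₁ * Wᴴ * (A * Aᴴ) = W * U₁ * (Wᴴ * (A * Aᴴ) * (W * Wᴴ)) from by
        rw [hW2, Matrix.mul_one]; simp only [Matrix.mul_assoc]]
      simp only [Matrix.mul_assoc]
    rw [e1, hU₁2, hZdef,
      show W * (Wᴴ * Z₀ * W) * Wᴴ = (W * Wᴴ) * Z₀ * (W * Wᴴ) from by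
        simp only [Matrix.mul_assoc], hW2, Matrix.one_mul, Matrix.mul_one]
  have hUA : U * A = V := by
    calc U * A = U * ((A * Aᴴ) * A) := by rw [hPA]
    _ = (U * (A * Aᴴ)) * A := by simp only [Matrix.mul_assoc]
    _ = Z₀ * A := by rw [hUP]
    _ = V * (Aᴴ * A) := by rw [hZ₀def]; simp only [Matrix.mul_assoc]
    _ = V := by rw [hAA, Matrix.mul_one]
  refine ⟨U, hUU, mul_eq_one_comm.mp hUU, ?_, hUM⟩
  intro ψ
  have hAv : (fun p : Fin d × Fin K => ψ p.1 * φ₀ p.2) = A *ᵥ ψ := by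
    funext p
    simp [hAdef, Matrix.mulVec, dotProduct, ite_mul, zero_mul,
      Finset.sum_ite_eq, mul_comm]
  rw [hAv, Matrix.mulVec_mulVec, hUA]
end

section
/- Let ℳ(ρ) = ∑_{k=1}^K M_k ρ M_k† be an energy-preserving quantum channel on d×d complex matrices, i.e. ∑_k M_k† M_k = I and M_k H = H M_k for every k, where H is a Hermitian d×d matrix. Then there exist a finite-dimensional environment ℂ^K, a unit vector φ₀ ∈ ℂ^K, and a unitary U on ℂ^d ⊗ ℂ^K satisfying U (H ⊗ I_K) = (H ⊗ I_K) U, such that for every d×d matrix ρ one has Tr₂[ U (ρ ⊗ |φ₀⟩⟨φ₀|) U† ] = ℳ(ρ). -/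
open Matrix
open scoped Kronecker

/-- The partial trace over the second tensor factor:
`(Tr₂ X) i j = ∑ a, X (i,a) (j,a)`. -/
noncomputable def ptrace2 {d K : ℕ} (X : Matrix (Fin d × Fin K) (Fin d × Fin K) ℂ) :
    Matrix (Fin d) (Fin d) ℂ :=
  Matrix.of fun i j => ∑ a : Fin K, X (i, a) (j, a)

noncomputable def Bmat {d K : ℕ} (M : Fin K → Matrix (Fin d) (Fin d) ℂ) :
    Fin (K+1) → Fin (K+1) → Matrix (Fin d) (Fin d) ℂ :=
  Fin.lastCases
    (Fin.lastCases 0 (fun b' => -(M b')ᴴ))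
    (fun a' => Fin.lastCases (M a')
      (fun b' => (if a' = b' then (1 : Matrix (Fin d) (Fin d) ℂ) else 0) - M a' * (M b')ᴴ))

@[simp] lemma Bmat_last_last {d K : ℕ} (M : Fin K → Matrix (Fin d) (Fin d) ℂ) :
    Bmat M (Fin.last K) (Fin.last K) = 0 := by simp [Bmat]

@[simp] lemma Bmat_last_cast {d K : ℕ} (M : Fin K → Matrix (Fin d) (Fin d) ℂ) (b : Fin K) :
    Bmat M (Fin.last K) b.castSucc = -(M b)ᴴ := by simp [Bmat]

@[simp] lemma Bmat_cast_last {d K : ℕ} (M : Fin K → Matrix (Fin d) (Fin d) ℂ) (a : Fin K) :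
    Bmat M a.castSucc (Fin.last K) = M a := by simp [Bmat]

@[simp] lemma Bmat_cast_cast {d K : ℕ} (M : Fin K → Matrix (Fin d) (Fin d) ℂ) (a b : Fin K) :
    Bmat M a.castSucc b.castSucc
      = (if a = b then (1 : Matrix (Fin d) (Fin d) ℂ) else 0) - M a * (M b)ᴴ := by simp [Bmat]

section
variable {d K : ℕ} (M : Fin K → Matrix (Fin d) (Fin d) ℂ)
variable (hTP : ∑ k, (M k)ᴴ * M k = 1)
include hTP

lemma hs1 (b : Fin K) : ∑ k, (M k)ᴴ * (M k * (M b)ᴴ) = (M b)ᴴ := by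
  calc ∑ k, (M k)ᴴ * (M k * (M b)ᴴ) = (∑ k, (M k)ᴴ * M k) * (M b)ᴴ := by
        rw [Finset.sum_mul]; simp [mul_assoc]
    _ = (M b)ᴴ := by rw [hTP, one_mul]

lemma hs2 (a b : Fin K) : ∑ k, (M a * (M k)ᴴ) * (M k * (M b)ᴴ) = M a * (M b)ᴴ := by
  calc ∑ k, (M a * (M k)ᴴ) * (M k * (M b)ᴴ) = M a * ((∑ k, (M k)ᴴ * M k) * (M b)ᴴ) := by
        rw [Finset.sum_mul, Finset.mul_sum]; simp [mul_assoc]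
    _ = M a * (M b)ᴴ := by rw [hTP, one_mul]

lemma Bmat_col (a b : Fin (K+1)) :
    ∑ c, (Bmat M c a)ᴴ * Bmat M c b = if a = b then (1 : Matrix (Fin d) (Fin d) ℂ) else 0 := by
  induction a using Fin.lastCases with
  | last =>
    induction b using Fin.lastCases with
    | last => rw [Fin.sum_univ_castSucc]; simp [hTP]
    | cast b' =>
      rw [Fin.sum_univ_castSucc]
      simp [mul_sub, mul_ite, Finset.sum_sub_distrib, Finset.sum_ite_eq',
        hs1 M hTP b', (Fin.castSucc_lt_last b').ne']
  | cast a' =>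
    induction b using Fin.lastCases with
    | last =>
      rw [Fin.sum_univ_castSucc]
      have hct : ∀ k : Fin K, (if k = a' then (1 : Matrix (Fin d) (Fin d) ℂ) else 0)ᴴ
          = if k = a' then 1 else 0 := by intro k; split <;> simp
      simp [hct, sub_mul, ite_mul, Finset.sum_sub_distrib, Finset.sum_ite_eq,
        (Fin.castSucc_lt_last a').ne]
      rw [sub_eq_zero]
      calc M a' = M a' * ∑ k, (M k)ᴴ * M k := by rw [hTP, mul_one]
        _ = ∑ k, M a' * (M k)ᴴ * M k := by rw [Finset.mul_sum]; simp [mul_assoc]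
    | cast b' =>
      rw [Fin.sum_univ_castSucc]
      simp only [Bmat_cast_cast, Bmat_cast_last, conjTranspose_sub, conjTranspose_mul,
        conjTranspose_conjTranspose, conjTranspose_neg, neg_mul, mul_neg, neg_neg]
      have : ∀ k : Fin K, (if k = a' then (1 : Matrix (Fin d) (Fin d) ℂ) else 0)ᴴ
          = if k = a' then 1 else 0 := by intro k; split <;> simp
      simp only [this, sub_mul, mul_sub, ite_mul, mul_ite, one_mul, mul_one, zero_mul, mul_zero,
        Finset.sum_sub_distrib, Finset.sum_ite_eq, Finset.sum_ite_eq', Finset.mem_univ, if_true,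
        hs2 M hTP a' b']
      by_cases h : a' = b'
      · subst h; simp [Fin.castSucc_inj]
      · simp [h, Fin.castSucc_inj]
        intro h2; exact absurd h2.symm h
end

section
variable {d K : ℕ} (M : Fin K → Matrix (Fin d) (Fin d) ℂ)
variable (hTP : ∑ k, (M k)ᴴ * M k = 1)
include hTP

lemma hs3 (a : Fin K) : ∑ k, (M a * (M k)ᴴ) * M k = M a := by
  calc ∑ k, (M a * (M k)ᴴ) * M k = M a * ∑ k, (M k)ᴴ * M k := by
        rw [Finset.mul_sum]; simp [mul_assoc]
    _ = M a := by rw [hTP, mul_one]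

lemma Bmat_row (a b : Fin (K+1)) :
    ∑ c, Bmat M a c * (Bmat M b c)ᴴ = if a = b then (1 : Matrix (Fin d) (Fin d) ℂ) else 0 := by
  have hct : ∀ (x : Fin K) (k : Fin K), (if x = k then (1 : Matrix (Fin d) (Fin d) ℂ) else 0)ᴴ
      = if x = k then 1 else 0 := by intro x k; split <;> simp
  induction a using Fin.lastCases with
  | last =>
    induction b using Fin.lastCases with
    | last => rw [Fin.sum_univ_castSucc]; simp [hTP]
    | cast b' =>
      rw [Fin.sum_univ_castSucc]
      simp [hct, mul_sub, mul_ite, Finset.sum_sub_distrib, Finset.sum_add_distrib,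
        Finset.sum_ite_eq', Finset.sum_neg_distrib,
        hs1 M hTP b', (Fin.castSucc_lt_last b').ne']
  | cast a' =>
    induction b using Fin.lastCases with
    | last =>
      rw [Fin.sum_univ_castSucc]
      simp [hct, sub_mul, ite_mul, Finset.sum_sub_distrib, Finset.sum_add_distrib,
        Finset.sum_ite_eq, Finset.sum_neg_distrib,
        hs3 M hTP a', (Fin.castSucc_lt_last a').ne]
    | cast b' =>
      rw [Fin.sum_univ_castSucc]
      simp only [Bmat_cast_cast, Bmat_cast_last, conjTranspose_sub, conjTranspose_mul,
        conjTranspose_conjTranspose, hct, sub_mul, mul_sub, ite_mul, mul_ite, one_mul, mul_one,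
        zero_mul, mul_zero, Finset.sum_sub_distrib, Finset.sum_ite_eq, Finset.sum_ite_eq',
        Finset.mem_univ, if_true, hs2 M hTP a' b']
      by_cases h : a' = b'
      · subst h; simp [Fin.castSucc_inj]
      · simp [h, Fin.castSucc_inj]
end

lemma Bmat_commH {d K : ℕ} (H : Matrix (Fin d) (Fin d) ℂ) (hH : H.IsHermitian)
    (M : Fin K → Matrix (Fin d) (Fin d) ℂ) (hComm : ∀ k, M k * H = H * M k)
    (a b : Fin (K+1)) : Bmat M a b * H = H * Bmat M a b := by
  have hC' : ∀ k, (M k)ᴴ * H = H * (M k)ᴴ := by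
    intro k
    have := congrArg conjTranspose (hComm k)
    simpa [conjTranspose_mul, hH.eq] using this.symm
  have hC2 : ∀ k l, M k * (M l)ᴴ * H = H * (M k * (M l)ᴴ) := by
    intro k l
    rw [mul_assoc, hC', ← mul_assoc, hComm, mul_assoc]
  induction a using Fin.lastCases with
  | last =>
    induction b using Fin.lastCases with
    | last => simp
    | cast b' => simp [hC']
  | cast a' =>
    induction b using Fin.lastCases with
    | last => simp [hComm]
    | cast b' =>
      simp only [Bmat_cast_cast, sub_mul, mul_sub, ite_mul, mul_ite, one_mul, mul_one,
        zero_mul, mul_zero, hC2]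


/-- Every energy-preserving channel `ℳ(ρ) = ∑ k, M k * ρ * (M k)ᴴ` (Kraus operators commuting
with the Hermitian Hamiltonian `H`, `∑ k, (M k)ᴴ * M k = 1`) admits a Stinespring dilation by an
environment `ℂ^K'` in a pure state `φ₀` and a unitary `U` commuting with `H ⊗ I`:
`Tr₂[U (ρ ⊗ |φ₀⟩⟨φ₀|) Uᴴ] = ℳ(ρ)` for every `ρ`. -/
theorem stmt_4 {d K : ℕ}
    (H : Matrix (Fin d) (Fin d) ℂ) (hH : H.IsHermitian)
    (M : Fin K → Matrix (Fin d) (Fin d) ℂ)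
    (hTP : ∑ k, (M k)ᴴ * M k = 1)
    (hComm : ∀ k, M k * H = H * M k) :
    ∃ (K' : ℕ) (φ₀ : Fin K' → ℂ), star φ₀ ⬝ᵥ φ₀ = 1 ∧
      ∃ U : Matrix (Fin d × Fin K') (Fin d × Fin K') ℂ,
        Uᴴ * U = 1 ∧ U * Uᴴ = 1 ∧
        U * (H ⊗ₖ (1 : Matrix (Fin K') (Fin K') ℂ)) =
          (H ⊗ₖ (1 : Matrix (Fin K') (Fin K') ℂ)) * U ∧
        ∀ ρ : Matrix (Fin d) (Fin d) ℂ,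
          ptrace2 (U * (ρ ⊗ₖ vecMulVec φ₀ (star φ₀)) * Uᴴ) = ∑ k, M k * ρ * (M k)ᴴ := by
  refine ⟨K + 1, fun a => if a = Fin.last K then 1 else 0, ?_, ?_⟩
  · simp [dotProduct, apply_ite, Finset.sum_ite_eq']
  set U : Matrix (Fin d × Fin (K+1)) (Fin d × Fin (K+1)) ℂ :=
    Matrix.of (fun p q => Bmat M p.2 q.2 p.1 q.1) with hU
  refine ⟨U, ?_, ?_, ?_, ?_⟩
  · ext ⟨i, a⟩ ⟨j, b⟩
    calc (Uᴴ * U) (i, a) (j, b) = ∑ c, ((Bmat M c a)ᴴ * Bmat M c b) i j := by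
          simp only [mul_apply, conjTranspose_apply, hU, Matrix.of_apply,
            Fintype.sum_prod_type]
          rw [Finset.sum_comm]
      _ = (if a = b then (1 : Matrix (Fin d) (Fin d) ℂ) else 0) i j := by
          rw [← Matrix.sum_apply, Bmat_col M hTP a b]
      _ = (1 : Matrix (Fin d × Fin (K+1)) (Fin d × Fin (K+1)) ℂ) (i, a) (j, b) := by
          by_cases h : a = b <;> simp [Matrix.one_apply, h, Prod.ext_iff]
  · ext ⟨i, a⟩ ⟨j, b⟩
    calc (U * Uᴴ) (i, a) (j, b) = ∑ c, (Bmat M a c * (Bmat M b c)ᴴ) i j := by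
          simp only [mul_apply, conjTranspose_apply, hU, Matrix.of_apply,
            Fintype.sum_prod_type]
          rw [Finset.sum_comm]
      _ = (if a = b then (1 : Matrix (Fin d) (Fin d) ℂ) else 0) i j := by
          rw [← Matrix.sum_apply, Bmat_row M hTP a b]
      _ = (1 : Matrix (Fin d × Fin (K+1)) (Fin d × Fin (K+1)) ℂ) (i, a) (j, b) := by
          by_cases h : a = b <;> simp [Matrix.one_apply, h, Prod.ext_iff]
  · ext ⟨i, a⟩ ⟨j, b⟩
    have h1 : (U * (H ⊗ₖ (1 : Matrix (Fin (K+1)) (Fin (K+1)) ℂ))) (i, a) (j, b)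
        = (Bmat M a b * H) i j := by
      simp [mul_apply, hU, kroneckerMap_apply, Matrix.one_apply, Fintype.sum_prod_type,
        mul_ite, mul_zero, mul_one, Finset.sum_ite_eq']
    have h2 : ((H ⊗ₖ (1 : Matrix (Fin (K+1)) (Fin (K+1)) ℂ)) * U) (i, a) (j, b)
        = (H * Bmat M a b) i j := by
      simp [mul_apply, hU, kroneckerMap_apply, Matrix.one_apply, Fintype.sum_prod_type,
        ite_mul, zero_mul, one_mul, Finset.sum_ite_eq]
    rw [h1, h2, Bmat_commH H hH M hComm a b]
  · intro ρ
    ext i j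
    have hterm : ∀ a : Fin (K+1),
        (U * (ρ ⊗ₖ vecMulVec (fun a => if a = Fin.last K then (1:ℂ) else 0)
          (star fun a => if a = Fin.last K then (1:ℂ) else 0)) * Uᴴ) (i, a) (j, a)
        = (Bmat M a (Fin.last K) * ρ * (Bmat M a (Fin.last K))ᴴ) i j := by
      intro a
      simp [mul_apply, conjTranspose_apply, hU, Fintype.sum_prod_type, kroneckerMap_apply,
        vecMulVec_apply, apply_ite, mul_ite, ite_mul, mul_zero, zero_mul, mul_one, one_mul,
        Finset.sum_ite_eq', Finset.mul_sum, Finset.sum_mul, mul_assoc]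
    simp only [ptrace2, Matrix.of_apply, hterm]
    rw [Fin.sum_univ_castSucc]
    simp [Matrix.sum_apply]
end

section
/- Let X be a finite set and, for each x ∈ X, let {M_{x,k}}_{k=1}^{m_x} be d×d complex matrices such that every M_{x,k} commutes with a fixed Hermitian d×d matrix H and ∑_{x∈X} ∑_{k=1}^{m_x} M_{x,k}† M_{x,k} = I. Set K = ∑_{x} m_x. Then there exist an orthonormal basis {φ_{x,k}} of ℂ^K indexed by the pairs (x,k), a distinguished pair (x₀,k₀), and a unitary U on ℂ^d ⊗ ℂ^K with U (H ⊗ I_K) = (H ⊗ I_K) U, such that U(ψ ⊗ φ_{x₀,k₀}) = ∑_{x,k} (M_{x,k} ψ) ⊗ φ_{x,k} for every ψ ∈ ℂ^d; consequently, setting Q_x = ∑_{k=1}^{m_x} |φ_{x,k}⟩⟨φ_{x,k}| (orthogonal projections with ∑_x Q_x = I_K), one has Tr₂[ (I ⊗ Q_x) U (ρ ⊗ |φ_{x₀,k₀}⟩⟨φ_{x₀,k₀}|) U† ] = ∑_{k=1}^{m_x} M_{x,k} ρ M_{x,k}† for every x ∈ X and every d×d matrix ρ. -/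
open Matrix
open scoped Kronecker
set_option maxHeartbeats 1000000

lemma sum_block {d : ℕ} {S : Type} [Fintype S] (f : Fin d → ℂ) (c : ℂ)
    (g : Fin d → S → ℂ) (hg : ∀ i s, f i ≠ c → g i s = 0) :
    ∑ q : {i : Fin d // f i = c} × S, g q.1.1 q.2 = ∑ p : Fin d × S, g p.1 p.2 := by
  classical
  rw [Fintype.sum_prod_type, Fintype.sum_prod_type]
  calc ∑ i : {i : Fin d // f i = c}, ∑ s, g i.1 s
      = ∑ i ∈ Finset.univ.filter (fun i => f i = c), ∑ s, g i s := by
        rw [Finset.sum_subtype (p := fun i => f i = c)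
          (Finset.univ.filter (fun i => f i = c)) (by simp) (fun i => ∑ s, g i s)]
    _ = ∑ i : Fin d, if f i = c then ∑ s, g i s else 0 := Finset.sum_filter _ _
    _ = ∑ i : Fin d, ∑ s, g i s := by
        refine Finset.sum_congr rfl fun i _ => ?_
        split_ifs with h
        · rfl
        · exact (Finset.sum_eq_zero fun s _ => hg i s h).symm

lemma diag_core {d : ℕ} {S : Type} [Fintype S] [DecidableEq S] (s₀ : S)
    (f : Fin d → ℂ) (N : S → Matrix (Fin d) (Fin d) ℂ)
    (hC : ∀ s i j, N s i j * f j = f i * N s i j)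
    (hTP : ∑ s, (N s)ᴴ * N s = 1) :
    ∃ U : Matrix (Fin d × S) (Fin d × S) ℂ,
      Uᴴ * U = 1 ∧
      (∀ i s j t, f i ≠ f j → U (i,s) (j,t) = 0) ∧
      (∀ i s j, U (i,s) (j,s₀) = N s i j) := by
  classical
  have hvan : ∀ s i j, f i ≠ f j → N s i j = 0 := by
    intro s i j hne
    by_contra h
    have h2 : N s i j * f j = N s i j * f i := by rw [hC s i j]; ring
    exact hne ((mul_left_cancel₀ h h2)).symm
  have hex : ∀ c : ℂ, ∃ b : OrthonormalBasis ({i : Fin d // f i = c} × S) ℂ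
      (EuclideanSpace ℂ ({i : Fin d // f i = c} × S)),
      ∀ q : {i : Fin d // f i = c} × S, q.2 = s₀ →
        ∀ p, b q p = N p.2 p.1.1 q.1.1 := by
    intro c
    set v : ({i : Fin d // f i = c} × S) → EuclideanSpace ℂ ({i : Fin d // f i = c} × S) :=
      fun q => WithLp.toLp 2 (fun p => N p.2 p.1.1 q.1.1) with hv
    have hon : Orthonormal ℂ (Set.restrict {q : {i : Fin d // f i = c} × S | q.2 = s₀} v) := by
      rw [orthonormal_iff_ite]
      rintro ⟨⟨⟨j, hj⟩, t⟩, ht⟩ ⟨⟨⟨j', hj'⟩, t'⟩, ht'⟩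
      have ht1 : t = s₀ := ht
      have ht2 : t' = s₀ := ht'
      subst ht1 ht2
      have key : ∑ q : {i : Fin d // f i = c} × S,
          (starRingEnd ℂ) (N q.2 q.1.1 j) * N q.2 q.1.1 j' = if j = j' then 1 else 0 := by
        calc ∑ q : {i : Fin d // f i = c} × S,
              (starRingEnd ℂ) (N q.2 q.1.1 j) * N q.2 q.1.1 j'
            = ∑ p : Fin d × S, (starRingEnd ℂ) (N p.2 p.1 j) * N p.2 p.1 j' :=
              sum_block f c (fun i s => (starRingEnd ℂ) (N s i j) * N s i j')
                (fun i s hi => by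
                  show (starRingEnd ℂ) (N s i j) * N s i j' = 0
                  rw [hvan s i j (fun hh => hi (hh.trans hj)), map_zero, zero_mul])
          _ = ∑ s : S, ((N s)ᴴ * N s) j j' := by
              rw [Fintype.sum_prod_type, Finset.sum_comm]
              refine Finset.sum_congr rfl fun s _ => ?_
              simp [Matrix.mul_apply, Matrix.conjTranspose_apply]
          _ = (1 : Matrix (Fin d) (Fin d) ℂ) j j' := by rw [← Matrix.sum_apply, hTP]
          _ = if j = j' then 1 else 0 := Matrix.one_apply
      simp only [Set.restrict, Set.domRestrict_apply, hv, PiLp.inner_apply, WithLp.ofLp_toLp]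
      simp only [RCLike.inner_apply']
      rw [key]
      by_cases hjj : j = j'
      · subst hjj
        rw [if_pos rfl, if_pos rfl]
      · rw [if_neg hjj, if_neg (fun hcon => hjj (congrArg (fun z => z.1.1.1) hcon))]
    obtain ⟨bb, hbb⟩ := hon.exists_orthonormalBasis_extension_of_card_eq
        (card_ι := finrank_euclideanSpace)
    exact ⟨bb, fun q hq p => by rw [hbb q hq]⟩
  choose b hb using hex
  set U : Matrix (Fin d × S) (Fin d × S) ℂ :=
    fun p q => if h : f p.1 = f q.1 then b (f q.1) (⟨q.1, rfl⟩, q.2) (⟨p.1, h⟩, p.2) else 0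
    with hUdef
  have hUgen : ∀ (c : ℂ) (j : Fin d) (hj : f j = c) (t : S) (i : Fin d) (s : S),
      U (i,s) (j,t) = if h : f i = c then b c (⟨j,hj⟩, t) (⟨i,h⟩, s) else 0 := by
    intro c j hj t i s
    subst hj; rfl
  refine ⟨U, ?_, ?_, ?_⟩
  · ext ⟨j, t⟩ ⟨j', t'⟩
    rw [Matrix.mul_apply]
    by_cases he : f j' = f j
    · calc ∑ p : Fin d × S, Uᴴ (j,t) p * U p (j',t')
          = ∑ p : Fin d × S, (fun i s => if h : f i = f j then
              (starRingEnd ℂ) (b (f j) (⟨j, rfl⟩, t) (⟨i,h⟩, s)) *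
                b (f j) (⟨j', he⟩, t') (⟨i,h⟩, s) else 0) p.1 p.2 := by
            refine Finset.sum_congr rfl fun p _ => ?_
            obtain ⟨i, s⟩ := p
            rw [Matrix.conjTranspose_apply, hUgen (f j) j rfl t i s, hUgen (f j) j' he t' i s]
            by_cases h : f i = f j
            · rw [dif_pos h, dif_pos h]
              show star _ * _ = if h : f i = f j then _ else _
              rw [dif_pos h, starRingEnd_apply]
            · rw [dif_neg h, dif_neg h]
              show star (0:ℂ) * 0 = if h : f i = f j then _ else _
              rw [dif_neg h]; simp
        _ = ∑ q : {i : Fin d // f i = f j} × S, (fun i s => if h : f i = f j then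
              (starRingEnd ℂ) (b (f j) (⟨j, rfl⟩, t) (⟨i,h⟩, s)) *
                b (f j) (⟨j', he⟩, t') (⟨i,h⟩, s) else 0) q.1.1 q.2 :=
            (sum_block f (f j) (fun i s => if h : f i = f j then
              (starRingEnd ℂ) (b (f j) (⟨j, rfl⟩, t) (⟨i,h⟩, s)) *
                b (f j) (⟨j', he⟩, t') (⟨i,h⟩, s) else 0)
              (fun i s hi => dif_neg hi)).symm
        _ = ∑ q : {i : Fin d // f i = f j} × S,
              (starRingEnd ℂ) (b (f j) (⟨j, rfl⟩, t) q) * b (f j) (⟨j', he⟩, t') q := by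
            refine Finset.sum_congr rfl fun q _ => ?_
            obtain ⟨⟨i, hi⟩, s⟩ := q
            exact dif_pos hi
        _ = if ((⟨j, rfl⟩, t) : {i : Fin d // f i = f j} × S) = (⟨j', he⟩, t') then 1 else 0 := by
            have h2 := (orthonormal_iff_ite.mp (b (f j)).orthonormal) (⟨j, rfl⟩, t) (⟨j', he⟩, t')
            simpa [PiLp.inner_apply, RCLike.inner_apply', mul_comm] using h2
        _ = (1 : Matrix (Fin d × S) (Fin d × S) ℂ) (j,t) (j',t') := by
            rw [Matrix.one_apply]
            by_cases hjj : j = j'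
            · subst hjj
              by_cases htt : t = t'
              · subst htt; rw [if_pos rfl, if_pos rfl]
              · rw [if_neg (fun hcon => htt (congrArg Prod.snd hcon)),
                  if_neg (fun hcon => htt (congrArg Prod.snd hcon))]
            · rw [if_neg (fun hcon => hjj (congrArg (fun z => z.1.1) hcon)),
                if_neg (fun hcon => hjj (congrArg (fun z => z.1) hcon))]
    · have hz : ∀ p : Fin d × S, Uᴴ (j,t) p * U p (j',t') = 0 := by
        rintro ⟨i, s⟩
        by_cases h : f i = f j'
        · rw [Matrix.conjTranspose_apply, hUgen (f j) j rfl t i s,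
            dif_neg (fun hh : f i = f j => he (h.symm.trans hh))]
          simp
        · rw [hUgen (f j') j' rfl t' i s, dif_neg h, mul_zero]
      rw [Finset.sum_congr rfl (fun p _ => hz p), Finset.sum_const_zero, Matrix.one_apply,
        if_neg (fun hcon => he (congrArg (fun z => f z.1) hcon).symm)]
  · intro i s j t hne
    rw [hUgen (f j) j rfl t i s]
    exact dif_neg hne
  · intro i s j
    rw [hUgen (f j) j rfl s₀ i s]
    by_cases h : f i = f j
    · rw [dif_pos h, hb (f j) (⟨j, rfl⟩, s₀) rfl (⟨i,h⟩, s)]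
    · rw [dif_neg h, hvan s i j h]

lemma kron_conjTranspose {l m n p : Type*} (A : Matrix l m ℂ) (B : Matrix n p ℂ) :
    (A ⊗ₖ B)ᴴ = Aᴴ ⊗ₖ Bᴴ := by
  ext ⟨i, s⟩ ⟨j, t⟩
  simp [Matrix.conjTranspose_apply, Matrix.kroneckerMap_apply, star_mul']

/-- The partial trace over the second tensor factor:
`(Tr₂ X) i j = ∑ a, X (i,a) (j,a)`. -/
noncomputable def ptrace2' {d : ℕ} {ι : Type*} [Fintype ι]
    (X : Matrix (Fin d × ι) (Fin d × ι) ℂ) : Matrix (Fin d) (Fin d) ℂ :=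
  Matrix.of fun i j => ∑ a : ι, X (i, a) (j, a)

/-- Every energy-preserving quantum instrument `{ℳ_x}` with Kraus operators `M x k`
(commuting with the Hermitian `H`, and with `∑ x k, (M x k)ᴴ * M x k = 1`) admits a dilation by
an environment of dimension `K = ∑ x, m x` (indexed by the pairs `(x,k)`): there are an
orthonormal basis `φ`, a distinguished pair `s₀`, and a unitary `U` commuting with `H ⊗ I`, with
`U (ψ ⊗ φ s₀) = ∑ (x,k), (M x k ψ) ⊗ φ (x,k)`; consequently, with `Q x = ∑ k, |φ (x,k)⟩⟨φ (x,k)|`,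
`Tr₂[(I ⊗ Q x) U (ρ ⊗ |φ s₀⟩⟨φ s₀|) Uᴴ] = ∑ k, M x k * ρ * (M x k)ᴴ` for all `x` and `ρ`. -/
theorem stmt_5 {d : ℕ} (hd : 0 < d) {X : Type} [Fintype X] [DecidableEq X]
    (m : X → ℕ)
    (H : Matrix (Fin d) (Fin d) ℂ) (hH : H.IsHermitian)
    (M : (x : X) → Fin (m x) → Matrix (Fin d) (Fin d) ℂ)
    (hComm : ∀ x k, M x k * H = H * M x k)
    (hTP : ∑ x : X, ∑ k : Fin (m x), (M x k)ᴴ * M x k = 1) :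
    ∃ φ : ((x : X) × Fin (m x)) → (((x : X) × Fin (m x)) → ℂ),
      (∀ s t, star (φ s) ⬝ᵥ φ t = if s = t then 1 else 0) ∧
      ∃ s₀ : (x : X) × Fin (m x),
        ∃ U : Matrix (Fin d × ((x : X) × Fin (m x))) (Fin d × ((x : X) × Fin (m x))) ℂ,
          Uᴴ * U = 1 ∧ U * Uᴴ = 1 ∧
          U * (H ⊗ₖ (1 : Matrix ((x : X) × Fin (m x)) ((x : X) × Fin (m x)) ℂ)) =
            (H ⊗ₖ (1 : Matrix ((x : X) × Fin (m x)) ((x : X) × Fin (m x)) ℂ)) * U ∧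
          (∀ ψ : Fin d → ℂ,
            U *ᵥ (fun p => ψ p.1 * φ s₀ p.2) =
              ∑ s : (x : X) × Fin (m x), fun p => (M s.1 s.2 *ᵥ ψ) p.1 * φ s p.2) ∧
          (∀ (x : X) (ρ : Matrix (Fin d) (Fin d) ℂ),
            ptrace2' (((1 : Matrix (Fin d) (Fin d) ℂ) ⊗ₖ
                (∑ k : Fin (m x), vecMulVec (φ ⟨x, k⟩) (star (φ ⟨x, k⟩)))) *
                (U * (ρ ⊗ₖ vecMulVec (φ s₀) (star (φ s₀))) * Uᴴ)) =
              ∑ k : Fin (m x), M x k * ρ * (M x k)ᴴ) := by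
  
  classical
  -- the environment index type
  set S := (x : X) × Fin (m x) with hS
  -- S is nonempty
  have hSne : Nonempty S := by
    by_contra hc
    rw [not_nonempty_iff] at hc
    have h0 : (0 : Matrix (Fin d) (Fin d) ℂ) = 1 := by
      rw [← hTP]
      exact (Finset.sum_eq_zero fun x _ => Finset.sum_eq_zero fun k _ =>
        (hc.false (⟨x, k⟩ : S)).elim).symm
    have h1 := congrFun (congrFun h0 ⟨0, hd⟩) ⟨0, hd⟩
    simp [Matrix.one_apply] at h1
  obtain ⟨s₀⟩ := hSne
  -- diagonalization of H
  set W : Matrix (Fin d) (Fin d) ℂ := (hH.eigenvectorUnitary : Matrix (Fin d) (Fin d) ℂ) with hWdef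
  have hWW : W * Wᴴ = 1 := by
    have := (Matrix.mem_unitaryGroup_iff).mp hH.eigenvectorUnitary.2
    rwa [Matrix.star_eq_conjTranspose] at this
  have hW'W : Wᴴ * W = 1 := by
    have := (Matrix.mem_unitaryGroup_iff').mp hH.eigenvectorUnitary.2
    rwa [Matrix.star_eq_conjTranspose] at this
  have hWZ : ∀ Z : Matrix (Fin d) (Fin d) ℂ, W * (Wᴴ * Z) = Z := fun Z => by
    rw [← Matrix.mul_assoc, hWW, Matrix.one_mul]
  have hW'Z : ∀ Z : Matrix (Fin d) (Fin d) ℂ, Wᴴ * (W * Z) = Z := fun Z => by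
    rw [← Matrix.mul_assoc, hW'W, Matrix.one_mul]
  set f : Fin d → ℂ := RCLike.ofReal ∘ hH.eigenvalues with hfdef
  set D : Matrix (Fin d) (Fin d) ℂ := Matrix.diagonal f with hDdef
  have hD : Wᴴ * H * W = D := by
    have := hH.conjStarAlgAut_star_eigenvectorUnitary
    rwa [Unitary.conjStarAlgAut_apply, Unitary.coe_star, star_star, Matrix.star_eq_conjTranspose] at this
  have hHWDW : H = W * D * Wᴴ := by
    have := hH.spectral_theorem
    rw [Unitary.conjStarAlgAut_apply, Matrix.star_eq_conjTranspose] at this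
    exact this
  have hconj : ∀ A B : Matrix (Fin d) (Fin d) ℂ,
      (Wᴴ * A * W) * (Wᴴ * B * W) = Wᴴ * (A * B) * W := by
    intro A B
    calc (Wᴴ * A * W) * (Wᴴ * B * W) = Wᴴ * (A * (W * (Wᴴ * (B * W)))) := by
          simp only [Matrix.mul_assoc]
      _ = Wᴴ * (A * (B * W)) := by rw [hWZ]
      _ = Wᴴ * (A * B) * W := by simp only [Matrix.mul_assoc]
  set N : S → Matrix (Fin d) (Fin d) ℂ := fun s => Wᴴ * M s.1 s.2 * W with hNdef
  have hCN : ∀ (s : S) (i j : Fin d), N s i j * f j = f i * N s i j := by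
    intro s i j
    have hmat : N s * D = D * N s := by
      rw [← hD, hNdef]
      calc (Wᴴ * M s.1 s.2 * W) * (Wᴴ * H * W) = Wᴴ * (M s.1 s.2 * H) * W := hconj _ _
        _ = Wᴴ * (H * M s.1 s.2) * W := by rw [hComm]
        _ = (Wᴴ * H * W) * (Wᴴ * M s.1 s.2 * W) := (hconj _ _).symm
    have := congrFun (congrFun hmat i) j
    rwa [hDdef, Matrix.mul_diagonal, Matrix.diagonal_mul] at this
  have hTN : ∑ s : S, (N s)ᴴ * N s = 1 := by
    have hNs : ∀ s : S, (N s)ᴴ * N s = Wᴴ * ((M s.1 s.2)ᴴ * M s.1 s.2) * W := by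
      intro s
      rw [hNdef]
      have : (Wᴴ * M s.1 s.2 * W)ᴴ = Wᴴ * (M s.1 s.2)ᴴ * W := by
        simp [Matrix.conjTranspose_mul, Matrix.mul_assoc]
      rw [this]
      exact hconj _ _
    calc ∑ s : S, (N s)ᴴ * N s
        = Wᴴ * (∑ s : S, (M s.1 s.2)ᴴ * M s.1 s.2) * W := by
          rw [Finset.mul_sum, Finset.sum_mul]
          exact Finset.sum_congr rfl fun s _ => by rw [hNs s, Matrix.mul_assoc, Matrix.mul_assoc]
      _ = Wᴴ * 1 * W := by
          rw [← hTP]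
          congr 1
          · congr 1
            rw [← Finset.univ_sigma_univ, Finset.sum_sigma]
      _ = 1 := by rw [Matrix.mul_one, hW'W]
  obtain ⟨U₀, hU₀unit, hU₀van, hU₀ent⟩ := diag_core s₀ f N hCN hTN
  -- φ is the standard basis
  set φ : S → (S → ℂ) := fun s => Pi.single s 1 with hφdef
  have hφorth : ∀ s t : S, star (φ s) ⬝ᵥ φ t = if s = t then 1 else 0 := by
    intro s t
    have hstar : star (φ s) = φ s := by
      funext u
      rw [Pi.star_apply, hφdef]
      simp only [Pi.single_apply]
      split_ifs <;> simp
    rw [hstar, hφdef]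
    simp only [dotProduct, Pi.single_apply, ite_mul, one_mul, zero_mul,
      @Finset.sum_ite_eq' S _ _ (inferInstanceAs (DecidableEq ((x : X) × Fin (m x)))), Finset.mem_univ, if_true]
  set A : Matrix (Fin d × S) (Fin d × S) ℂ := W ⊗ₖ (1 : Matrix S S ℂ) with hAdef
  set A' : Matrix (Fin d × S) (Fin d × S) ℂ := Wᴴ ⊗ₖ (1 : Matrix S S ℂ) with hA'def
  have hAA' : A * A' = 1 := by
    rw [hAdef, hA'def, ← Matrix.mul_kronecker_mul, hWW, Matrix.one_mul, Matrix.one_kronecker_one]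
  have hA'A : A' * A = 1 := by
    rw [hAdef, hA'def, ← Matrix.mul_kronecker_mul, hW'W, Matrix.one_mul, Matrix.one_kronecker_one]
  have hAH : Aᴴ = A' := by
    rw [hAdef, hA'def, kron_conjTranspose, Matrix.conjTranspose_one]
  have hA'H : A'ᴴ = A := by rw [← hAH, Matrix.conjTranspose_conjTranspose]
  have hA'AZ : ∀ Z : Matrix (Fin d × S) (Fin d × S) ℂ, A' * (A * Z) = Z := fun Z => by
    rw [← Matrix.mul_assoc, hA'A, Matrix.one_mul]
  set U : Matrix (Fin d × S) (Fin d × S) ℂ := A * U₀ * A' with hUdef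
  have hUH : Uᴴ = A * U₀ᴴ * A' := by
    rw [hUdef]
    simp only [Matrix.conjTranspose_mul, hAH, hA'H, Matrix.mul_assoc]
  have hUunit : Uᴴ * U = 1 := by
    rw [hUH, hUdef]
    calc (A * U₀ᴴ * A') * (A * U₀ * A')
        = A * (U₀ᴴ * (A' * (A * (U₀ * A')))) := by simp only [Matrix.mul_assoc]
      _ = A * (U₀ᴴ * (U₀ * A')) := by rw [hA'AZ]
      _ = A * ((U₀ᴴ * U₀) * A') := by rw [Matrix.mul_assoc]
      _ = 1 := by rw [hU₀unit, Matrix.one_mul, hAA']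
  have hUU' : U * Uᴴ = 1 := mul_eq_one_comm.mp hUunit
  have hU₀D : U₀ * (D ⊗ₖ (1 : Matrix S S ℂ)) = (D ⊗ₖ (1 : Matrix S S ℂ)) * U₀ := by
    have hDk : D ⊗ₖ (1 : Matrix S S ℂ) = Matrix.diagonal (fun p : Fin d × S => f p.1) := by
      rw [hDdef, ← Matrix.diagonal_one, Matrix.diagonal_kronecker_diagonal]
      simp
    rw [hDk]
    ext ⟨i, s⟩ ⟨j, t⟩
    rw [Matrix.mul_diagonal, Matrix.diagonal_mul]
    by_cases h : f i = f j
    · rw [h, mul_comm]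
    · rw [hU₀van i s j t h, zero_mul, mul_zero]
  have hHk : H ⊗ₖ (1 : Matrix S S ℂ) = A * ((D ⊗ₖ (1 : Matrix S S ℂ)) * A') := by
    rw [hAdef, hA'def, ← Matrix.mul_kronecker_mul, ← Matrix.mul_kronecker_mul, Matrix.one_mul,
      Matrix.one_mul, ← Matrix.mul_assoc, ← hHWDW]
  have hUcomm : U * (H ⊗ₖ (1 : Matrix S S ℂ)) = (H ⊗ₖ (1 : Matrix S S ℂ)) * U := by
    rw [hHk, hUdef]
    have h1 : (A * U₀ * A') * (A * ((D ⊗ₖ (1 : Matrix S S ℂ)) * A'))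
        = A * (U₀ * ((D ⊗ₖ (1 : Matrix S S ℂ)) * A')) := by
      calc (A * U₀ * A') * (A * ((D ⊗ₖ (1 : Matrix S S ℂ)) * A'))
          = A * (U₀ * (A' * (A * ((D ⊗ₖ (1 : Matrix S S ℂ)) * A')))) := by
            simp only [Matrix.mul_assoc]
        _ = A * (U₀ * ((D ⊗ₖ (1 : Matrix S S ℂ)) * A')) := by rw [hA'AZ]
    have h2 : (A * ((D ⊗ₖ (1 : Matrix S S ℂ)) * A')) * (A * U₀ * A')
        = A * ((D ⊗ₖ (1 : Matrix S S ℂ)) * (U₀ * A')) := by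
      calc (A * ((D ⊗ₖ (1 : Matrix S S ℂ)) * A')) * (A * U₀ * A')
          = A * ((D ⊗ₖ (1 : Matrix S S ℂ)) * (A' * (A * (U₀ * A')))) := by
            simp only [Matrix.mul_assoc]
        _ = A * ((D ⊗ₖ (1 : Matrix S S ℂ)) * (U₀ * A')) := by rw [hA'AZ]
    rw [h1, h2]
    congr 1
    rw [← Matrix.mul_assoc, hU₀D, Matrix.mul_assoc]
  -- entry condition for U
  have hWNW : ∀ s : S, W * (N s * Wᴴ) = M s.1 s.2 := by
    intro s
    rw [hNdef]
    calc W * ((Wᴴ * M s.1 s.2 * W) * Wᴴ)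
        = W * (Wᴴ * (M s.1 s.2 * (W * Wᴴ))) := by simp only [Matrix.mul_assoc]
      _ = M s.1 s.2 := by rw [hWW, Matrix.mul_one, hWZ]
  have hUE : ∀ (i : Fin d) (s : S) (j : Fin d), U (i,s) (j,s₀) = M s.1 s.2 i j := by
    intro i s j
    have hstep : ∀ (a : Fin d) (u : S), (U₀ * A') (a,u) (j,s₀) = (N u * Wᴴ) a j := by
      intro a u
      calc (U₀ * A') (a,u) (j,s₀)
          = ∑ r : Fin d × S, U₀ (a,u) r * A' r (j,s₀) := Matrix.mul_apply
        _ = ∑ b : Fin d, ∑ v : S, U₀ (a,u) (b,v) * (Wᴴ b j * (1 : Matrix S S ℂ) v s₀) := by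
            rw [Fintype.sum_prod_type]
            exact Finset.sum_congr rfl fun b _ => Finset.sum_congr rfl fun v _ => by
              rw [hA'def, Matrix.kroneckerMap_apply]
        _ = ∑ b : Fin d, U₀ (a,u) (b,s₀) * Wᴴ b j := by
            refine Finset.sum_congr rfl fun b _ => ?_
            simp only [Matrix.one_apply, mul_ite, mul_one, mul_zero,
              @Finset.sum_ite_eq S _ _ (inferInstanceAs (DecidableEq ((x : X) × Fin (m x)))), @Finset.sum_ite_eq' S _ _ (inferInstanceAs (DecidableEq ((x : X) × Fin (m x)))), Finset.mem_univ, if_true]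
        _ = ∑ b : Fin d, N u a b * Wᴴ b j :=
            Finset.sum_congr rfl fun b _ => by rw [hU₀ent]
        _ = (N u * Wᴴ) a j := (Matrix.mul_apply).symm
    calc U (i,s) (j,s₀)
        = ∑ r : Fin d × S, A (i,s) r * (U₀ * A') r (j,s₀) := by
          rw [hUdef, Matrix.mul_assoc, Matrix.mul_apply]
      _ = ∑ a : Fin d, ∑ u : S, (W i a * (1 : Matrix S S ℂ) s u) * (U₀ * A') (a,u) (j,s₀) := by
          rw [Fintype.sum_prod_type]
          exact Finset.sum_congr rfl fun a _ => Finset.sum_congr rfl fun u _ => by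
            rw [hAdef, Matrix.kroneckerMap_apply]
      _ = ∑ a : Fin d, W i a * (U₀ * A') (a,s) (j,s₀) := by
          refine Finset.sum_congr rfl fun a _ => ?_
          simp only [Matrix.one_apply, mul_ite, mul_one, mul_zero, ite_mul, zero_mul,
            @Finset.sum_ite_eq S _ _ (inferInstanceAs (DecidableEq ((x : X) × Fin (m x)))), @Finset.sum_ite_eq' S _ _ (inferInstanceAs (DecidableEq ((x : X) × Fin (m x)))), Finset.mem_univ, if_true]
      _ = ∑ a : Fin d, W i a * (N s * Wᴴ) a j :=
          Finset.sum_congr rfl fun a _ => by rw [hstep]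
      _ = (W * (N s * Wᴴ)) i j := (Matrix.mul_apply).symm
      _ = M s.1 s.2 i j := by rw [hWNW]
  -- entry lemmas for φ
  have hφap : ∀ s u : S, φ s u = if u = s then 1 else 0 := fun s u => by
    rw [hφdef]
    exact Pi.single_apply s 1 u
  have hφsap : ∀ s u : S, star (φ s) u = if u = s then 1 else 0 := fun s u => by
    rw [Pi.star_apply, hφap]
    split_ifs <;> simp
  -- the mulVec property
  have hmv : ∀ ψ : Fin d → ℂ,
      U *ᵥ (fun p : Fin d × S => ψ p.1 * φ s₀ p.2) =
        ∑ s : S, fun p : Fin d × S => (M s.1 s.2 *ᵥ ψ) p.1 * φ s p.2 := by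
    intro ψ
    funext p
    obtain ⟨i, s⟩ := p
    have hL : (U *ᵥ fun p : Fin d × S => ψ p.1 * φ s₀ p.2) (i,s) = (M s.1 s.2 *ᵥ ψ) i := by
      calc (U *ᵥ fun p : Fin d × S => ψ p.1 * φ s₀ p.2) (i,s)
          = ∑ q : Fin d × S, U (i,s) q * (ψ q.1 * φ s₀ q.2) := rfl
        _ = ∑ j : Fin d, ∑ t : S, U (i,s) (j,t) * (ψ j * φ s₀ t) := by
            rw [Fintype.sum_prod_type]
        _ = ∑ j : Fin d, U (i,s) (j,s₀) * ψ j := by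
            refine Finset.sum_congr rfl fun j _ => ?_
            simp only [hφap, mul_ite, mul_one, mul_zero,
              @Finset.sum_ite_eq S _ _ (inferInstanceAs (DecidableEq ((x : X) × Fin (m x)))), @Finset.sum_ite_eq' S _ _ (inferInstanceAs (DecidableEq ((x : X) × Fin (m x)))), Finset.mem_univ, if_true]
        _ = ∑ j : Fin d, M s.1 s.2 i j * ψ j :=
            Finset.sum_congr rfl fun j _ => by rw [hUE]
        _ = (M s.1 s.2 *ᵥ ψ) i := rfl
    have hR : (∑ s' : S, fun p : Fin d × S => (M s'.1 s'.2 *ᵥ ψ) p.1 * φ s' p.2) (i,s)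
        = (M s.1 s.2 *ᵥ ψ) i := by
      rw [Finset.sum_apply]
      simp only [hφap, mul_ite, mul_one, mul_zero,
        @Finset.sum_ite_eq S _ _ (inferInstanceAs (DecidableEq ((x : X) × Fin (m x)))), @Finset.sum_ite_eq' S _ _ (inferInstanceAs (DecidableEq ((x : X) × Fin (m x)))), Finset.mem_univ, if_true]
    rw [hL, hR]
  -- the partial trace property
  have hpt : ∀ (x : X) (ρ : Matrix (Fin d) (Fin d) ℂ),
      ptrace2' (((1 : Matrix (Fin d) (Fin d) ℂ) ⊗ₖ
          (∑ k : Fin (m x), vecMulVec (φ ⟨x, k⟩) (star (φ ⟨x, k⟩)))) *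
          (U * (ρ ⊗ₖ vecMulVec (φ s₀) (star (φ s₀))) * Uᴴ)) =
        ∑ k : Fin (m x), M x k * ρ * (M x k)ᴴ := by
    intro x ρ
    set R : Matrix (Fin d × S) (Fin d × S) ℂ := ρ ⊗ₖ vecMulVec (φ s₀) (star (φ s₀)) with hRdef
    have hRe : ∀ (a : Fin d) (u : S) (b : Fin d) (v : S),
        R (a,u) (b,v) = ρ a b * ((if u = s₀ then 1 else 0) * (if v = s₀ then 1 else 0)) := by
      intro a u b v
      rw [hRdef, Matrix.kroneckerMap_apply, Matrix.vecMulVec_apply, hφap, hφsap]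
    have hUR : ∀ (p : Fin d × S) (b : Fin d) (v : S),
        (U * R) p (b,v) = if v = s₀ then ∑ a : Fin d, M p.2.1 p.2.2 p.1 a * ρ a b else 0 := by
      rintro ⟨i, s⟩ b v
      calc (U * R) (i,s) (b,v) = ∑ r : Fin d × S, U (i,s) r * R r (b,v) := Matrix.mul_apply
        _ = ∑ a : Fin d, ∑ u : S, U (i,s) (a,u) *
              (ρ a b * ((if u = s₀ then 1 else 0) * (if v = s₀ then 1 else 0))) := by
            rw [Fintype.sum_prod_type]
            exact Finset.sum_congr rfl fun a _ => Finset.sum_congr rfl fun u _ => by rw [hRe]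
        _ = if v = s₀ then ∑ a : Fin d, M s.1 s.2 i a * ρ a b else 0 := by
            by_cases hv : v = s₀
            · rw [if_pos hv]
              simp only [mul_one, mul_ite, mul_zero,
                @Finset.sum_ite_eq S _ _ (inferInstanceAs (DecidableEq ((x : X) × Fin (m x)))), @Finset.sum_ite_eq' S _ _ (inferInstanceAs (DecidableEq ((x : X) × Fin (m x)))), Finset.mem_univ, if_true, hUE]
              rw [if_pos hv]
            · simp only [if_neg hv, mul_zero, Finset.sum_const_zero]
    have hG : ∀ (p : Fin d × S) (j : Fin d) (t : S), (U * R * Uᴴ) p (j,t)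
        = ∑ b : Fin d, (∑ a : Fin d, M p.2.1 p.2.2 p.1 a * ρ a b) *
            star (M t.1 t.2 j b) := by
      rintro ⟨i, s⟩ j t
      calc (U * R * Uᴴ) (i,s) (j,t)
          = ∑ r : Fin d × S, (U * R) (i,s) r * star (U (j,t) r) := by
            rw [Matrix.mul_apply]
            exact Finset.sum_congr rfl fun r _ => by rw [Matrix.conjTranspose_apply]
        _ = ∑ b : Fin d, ∑ v : S, (U * R) (i,s) (b,v) * star (U (j,t) (b,v)) := by
            rw [Fintype.sum_prod_type]
        _ = ∑ b : Fin d, (∑ a : Fin d, M s.1 s.2 i a * ρ a b) * star (U (j,t) (b,s₀)) := by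
            refine Finset.sum_congr rfl fun b _ => ?_
            simp only [hUR, ite_mul, zero_mul,
              @Finset.sum_ite_eq S _ _ (inferInstanceAs (DecidableEq ((x : X) × Fin (m x)))), @Finset.sum_ite_eq' S _ _ (inferInstanceAs (DecidableEq ((x : X) × Fin (m x)))), Finset.mem_univ, if_true]
        _ = ∑ b : Fin d, (∑ a : Fin d, M s.1 s.2 i a * ρ a b) * star (M t.1 t.2 j b) :=
            Finset.sum_congr rfl fun b _ => by rw [hUE]
    -- now the partial trace
    ext i j
    show (∑ a : S, (((1 : Matrix (Fin d) (Fin d) ℂ) ⊗ₖ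
        (∑ k : Fin (m x), vecMulVec (φ ⟨x, k⟩) (star (φ ⟨x, k⟩)))) * (U * R * Uᴴ)) (i, a) (j, a))
        = (∑ k : Fin (m x), M x k * ρ * (M x k)ᴴ) i j
    have hQ : ∀ (a u : S), (∑ k : Fin (m x), vecMulVec (φ ⟨x, k⟩) (star (φ ⟨x, k⟩))) a u
        = ∑ k : Fin (m x), (if a = (⟨x, k⟩ : S) then 1 else 0) *
            (if u = (⟨x, k⟩ : S) then 1 else 0) := by
      intro a u
      rw [Matrix.sum_apply]
      exact Finset.sum_congr rfl fun k _ => by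
        rw [Matrix.vecMulVec_apply, hφap, hφsap]
    calc ∑ a : S, (((1 : Matrix (Fin d) (Fin d) ℂ) ⊗ₖ
            (∑ k : Fin (m x), vecMulVec (φ ⟨x, k⟩) (star (φ ⟨x, k⟩)))) * (U * R * Uᴴ)) (i, a) (j, a)
        = ∑ a : S, ∑ k : Fin (m x), (if a = (⟨x,k⟩ : S) then 1 else 0) *
            (U * R * Uᴴ) (i, (⟨x,k⟩ : S)) (j, a) := by
          refine Finset.sum_congr rfl fun a _ => ?_
          calc (((1 : Matrix (Fin d) (Fin d) ℂ) ⊗ₖ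
                (∑ k : Fin (m x), vecMulVec (φ ⟨x, k⟩) (star (φ ⟨x, k⟩)))) * (U * R * Uᴴ)) (i, a) (j, a)
              = ∑ i' : Fin d, ∑ u : S, ((if i = i' then 1 else 0) *
                  (∑ k : Fin (m x), vecMulVec (φ ⟨x, k⟩) (star (φ ⟨x, k⟩))) a u) *
                  (U * R * Uᴴ) (i',u) (j,a) := by
                rw [Matrix.mul_apply, Fintype.sum_prod_type]
                exact Finset.sum_congr rfl fun i' _ => Finset.sum_congr rfl fun u _ => by
                  rw [Matrix.kroneckerMap_apply, Matrix.one_apply]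
            _ = ∑ u : S, (∑ k : Fin (m x), vecMulVec (φ ⟨x, k⟩) (star (φ ⟨x, k⟩))) a u *
                  (U * R * Uᴴ) (i,u) (j,a) := by
                rw [Finset.sum_comm]
                refine Finset.sum_congr rfl fun u _ => ?_
                simp only [ite_mul, one_mul, zero_mul, Finset.sum_ite_eq, Finset.mem_univ, if_true]
            _ = ∑ u : S, ∑ k : Fin (m x), ((if a = (⟨x,k⟩ : S) then 1 else 0) *
                  (if u = (⟨x,k⟩ : S) then 1 else 0)) * (U * R * Uᴴ) (i,u) (j,a) := by
                refine Finset.sum_congr rfl fun u _ => ?_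
                rw [hQ, Finset.sum_mul]
            _ = ∑ k : Fin (m x), ∑ u : S, ((if a = (⟨x,k⟩ : S) then 1 else 0) *
                  (if u = (⟨x,k⟩ : S) then 1 else 0)) * (U * R * Uᴴ) (i,u) (j,a) :=
                Finset.sum_comm
            _ = ∑ k : Fin (m x), (if a = (⟨x,k⟩ : S) then 1 else 0) *
                  (U * R * Uᴴ) (i, (⟨x,k⟩ : S)) (j, a) := by
                refine Finset.sum_congr rfl fun k _ => ?_
                simp only [mul_assoc, ite_mul, one_mul, zero_mul, mul_ite, mul_zero,
                  @Finset.sum_ite_eq S _ _ (inferInstanceAs (DecidableEq ((x : X) × Fin (m x)))), @Finset.sum_ite_eq' S _ _ (inferInstanceAs (DecidableEq ((x : X) × Fin (m x)))), Finset.mem_univ, if_true]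
      _ = ∑ k : Fin (m x), ∑ a : S, (if a = (⟨x,k⟩ : S) then 1 else 0) *
            (U * R * Uᴴ) (i, (⟨x,k⟩ : S)) (j, a) := Finset.sum_comm
      _ = ∑ k : Fin (m x), (U * R * Uᴴ) (i, (⟨x,k⟩ : S)) (j, (⟨x,k⟩ : S)) := by
          refine Finset.sum_congr rfl fun k _ => ?_
          simp only [ite_mul, one_mul, zero_mul, @Finset.sum_ite_eq S _ _ (inferInstanceAs (DecidableEq ((x : X) × Fin (m x)))), @Finset.sum_ite_eq' S _ _ (inferInstanceAs (DecidableEq ((x : X) × Fin (m x)))), Finset.mem_univ, if_true]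
      _ = ∑ k : Fin (m x), (M x k * ρ * (M x k)ᴴ) i j := by
          refine Finset.sum_congr rfl fun k _ => ?_
          calc (U * R * Uᴴ) (i, (⟨x,k⟩ : S)) (j, (⟨x,k⟩ : S))
              = ∑ b : Fin d, (∑ a : Fin d, M x k i a * ρ a b) * star (M x k j b) :=
                hG (i, (⟨x,k⟩ : S)) j (⟨x,k⟩ : S)
            _ = (M x k * ρ * (M x k)ᴴ) i j := by
                rw [Matrix.mul_apply (M := M x k * ρ) (N := (M x k)ᴴ)]
                exact Finset.sum_congr rfl fun b _ => by
                  rw [Matrix.mul_apply, Matrix.conjTranspose_apply]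
      _ = (∑ k : Fin (m x), M x k * ρ * (M x k)ᴴ) i j := (Matrix.sum_apply _ _ _ _).symm
  exact ⟨φ, hφorth, s₀, U, hUunit, hUU', hUcomm, hmv, hpt⟩
end

section
/- Let H_in be a Hermitian d_in×d_in matrix and H_out a Hermitian d_out×d_out matrix, and let ℳ(ρ) = ∑_{k=1}^K M_k ρ M_k† (with M_k of size d_out×d_in and ∑_k M_k† M_k ≤ I) be covariant, meaning ℳ( e^{-itH_in} ρ e^{itH_in} ) = e^{-itH_out} ℳ(ρ) e^{itH_out} for every t ∈ ℝ and every d_in×d_in matrix ρ. Then P := ∑_k M_k† M_k commutes with H_in. If moreover P is invertible, there exists a quantum channel 𝒞(ρ) = ∑_j C_j ρ C_j† (with ∑_j C_j† C_j = I) that is also covariant in the same sense and satisfies ℳ(ρ) = 𝒞( √P ρ √P ) for every ρ, where √P is the positive square root of P. -/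
open Matrix
open scoped ComplexOrder

noncomputable def timeEvo {n : ℕ} (t : ℝ) (H : Matrix (Fin n) (Fin n) ℂ) :
    Matrix (Fin n) (Fin n) ℂ :=
  NormedSpace.exp ((-(Complex.I * (t : ℂ))) • H)

section helpers

attribute [local instance] Matrix.linftyOpNormedRing Matrix.linftyOpNormedAlgebra
variable {n : ℕ}

lemma timeEvo_mul_neg (t : ℝ) (H : Matrix (Fin n) (Fin n) ℂ) :
    timeEvo t H * timeEvo (-t) H = 1 := by
  unfold timeEvo
  rw [← Matrix.exp_add_of_commute _ _ (((Commute.refl H).smul_left _).smul_right _)]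
  rw [← add_smul]
  norm_num

lemma timeEvo_conjTranspose {t : ℝ} {H : Matrix (Fin n) (Fin n) ℂ} (hH : H.IsHermitian) :
    (timeEvo t H)ᴴ = timeEvo (-t) H := by
  unfold timeEvo
  rw [← Matrix.exp_conjTranspose, conjTranspose_smul, hH.eq]
  congr 1
  simp [Complex.ext_iff]

lemma eq_of_trace_mul_eq {A B : Matrix (Fin n) (Fin n) ℂ}
    (h : ∀ ρ : Matrix (Fin n) (Fin n) ℂ, (A * ρ).trace = (B * ρ).trace) : A = B := by
  ext i j
  have := h (single j i 1)
  simpa [Matrix.trace, Matrix.diag, Matrix.mul_apply, Matrix.single,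
    Matrix.of_apply, ite_and, Finset.sum_ite_eq, Finset.sum_ite_eq'] using this

lemma commute_of_commute_timeEvo {H P : Matrix (Fin n) (Fin n) ℂ}
    (h : ∀ t : ℝ, P * timeEvo t H = timeEvo t H * P) : P * H = H * P := by
  have h1 : HasDerivAt (fun c : ℂ => NormedSpace.exp (c • H)) H
      (-(Complex.I * ((0:ℝ) : ℂ))) := by
    have h := hasDerivAt_exp_smul_const H (0 : ℂ)
    simp at h; simp only [Complex.ofReal_zero, mul_zero, neg_zero]; exact h
  have hr : HasDerivAt (fun t : ℝ => (t : ℂ)) 1 0 := by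
    simpa using (hasDerivAt_id (0:ℝ)).ofReal_comp
  have h2 : HasDerivAt (fun t : ℝ => -(Complex.I * (t : ℂ))) (-Complex.I) 0 := by
    simpa using (hr.const_mul Complex.I).fun_neg
  have hf : HasDerivAt (fun t : ℝ => timeEvo t H) ((-Complex.I) • H) 0 := by
    have h2' : HasDerivAt (fun t : ℝ => -(Complex.I * (t : ℂ))) (-Complex.I) 0 := h2
    have := h1.scomp (x := (0:ℝ)) (h := fun t : ℝ => -(Complex.I * (t : ℂ))) (by simpa using h2')
    simp only [Function.comp_def] at this
    simp [timeEvo, neg_smul] at this ⊢; exact this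
  have hF : HasDerivAt (fun t : ℝ => P * timeEvo t H) (P * ((-Complex.I) • H)) 0 :=
    hf.const_mul P
  have hG : HasDerivAt (fun t : ℝ => P * timeEvo t H) (((-Complex.I) • H) * P) 0 := by
    have := hf.mul_const P
    rw [funext h]; exact this
  have := hF.unique hG
  rw [mul_smul_comm, smul_mul_assoc] at this
  have hI : (-Complex.I) ≠ 0 := by simp [Complex.I_ne_zero]
  exact smul_right_injective _ hI this

end helpers

open scoped Matrix.Norms.L2Operator MatrixOrder in
lemma psd_eq_of_sq {n : ℕ} {A B : Matrix (Fin n) (Fin n) ℂ} (hA : A.PosSemidef) (hB : B.PosSemidef)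
    (h : A ^ 2 = B ^ 2) : A = B :=
  (CFC.sq_eq_sq_iff A B hA.nonneg hB.nonneg).1 h

set_option maxHeartbeats 1000000 in
/-- A covariant quantum operation `ℳ(ρ) = ∑ k, M k ρ (M k)ᴴ` (with `∑ k, (M k)ᴴ M k ≤ 1`,
and `ℳ(e^{-itH_in} ρ e^{itH_in}) = e^{-itH_out} ℳ(ρ) e^{itH_out}` for all `t`) has
`P = ∑ k, (M k)ᴴ M k` commuting with `H_in`; and if `P` is invertible then `ℳ` factors as a
covariant quantum *channel* `𝒞` applied after the Lüders filter `ρ ↦ √P ρ √P`. -/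
theorem stmt_6 {din dout K : ℕ}
    (Hin : Matrix (Fin din) (Fin din) ℂ) (hHin : Hin.IsHermitian)
    (Hout : Matrix (Fin dout) (Fin dout) ℂ) (hHout : Hout.IsHermitian)
    (M : Fin K → Matrix (Fin dout) (Fin din) ℂ)
    (hsub : ((1 : Matrix (Fin din) (Fin din) ℂ) - ∑ k, (M k)ᴴ * M k).PosSemidef)
    (hcov : ∀ (t : ℝ) (ρ : Matrix (Fin din) (Fin din) ℂ),
      ∑ k, M k * (timeEvo t Hin * ρ * timeEvo (-t) Hin) * (M k)ᴴ =
        timeEvo t Hout * (∑ k, M k * ρ * (M k)ᴴ) * timeEvo (-t) Hout) :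
    (∑ k, (M k)ᴴ * M k) * Hin = Hin * (∑ k, (M k)ᴴ * M k) ∧
    (IsUnit (∑ k, (M k)ᴴ * M k) →
      ∀ S : Matrix (Fin din) (Fin din) ℂ, S.PosSemidef →
        S * S = ∑ k, (M k)ᴴ * M k →
        ∃ (J : ℕ) (C : Fin J → Matrix (Fin dout) (Fin din) ℂ),
          (∑ j, (C j)ᴴ * C j = 1) ∧
          (∀ (t : ℝ) (ρ : Matrix (Fin din) (Fin din) ℂ),
            ∑ j, C j * (timeEvo t Hin * ρ * timeEvo (-t) Hin) * (C j)ᴴ =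
              timeEvo t Hout * (∑ j, C j * ρ * (C j)ᴴ) * timeEvo (-t) Hout) ∧
          (∀ ρ : Matrix (Fin din) (Fin din) ℂ,
            ∑ k, M k * ρ * (M k)ᴴ = ∑ j, C j * (S * ρ * S) * (C j)ᴴ)) := by
  have key : ∀ t : ℝ,
      (∑ k, (M k)ᴴ * M k) * timeEvo t Hin = timeEvo t Hin * (∑ k, (M k)ᴴ * M k) := by
    intro t
    have hUU' : timeEvo t Hin * timeEvo (-t) Hin = 1 := timeEvo_mul_neg t Hin
    have hVV : timeEvo (-t) Hout * timeEvo t Hout = 1 := by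
      have := timeEvo_mul_neg (-t) Hout; rwa [neg_neg] at this
    have hA : timeEvo (-t) Hin * (∑ k, (M k)ᴴ * M k) * timeEvo t Hin
        = ∑ k, (M k)ᴴ * M k := by
      apply eq_of_trace_mul_eq
      intro ρ
      calc ((timeEvo (-t) Hin * (∑ k, (M k)ᴴ * M k)) * timeEvo t Hin * ρ).trace
          = ((ρ * (timeEvo (-t) Hin * (∑ k, (M k)ᴴ * M k))) * timeEvo t Hin).trace :=
            Matrix.trace_mul_cycle _ _ _
        _ = (timeEvo t Hin * (ρ * (timeEvo (-t) Hin * (∑ k, (M k)ᴴ * M k)))).trace :=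
            Matrix.trace_mul_comm _ _
        _ = ((timeEvo t Hin * ρ * timeEvo (-t) Hin) * (∑ k, (M k)ᴴ * M k)).trace := by
            simp only [← mul_assoc]
        _ = ((∑ k, (M k)ᴴ * M k) * (timeEvo t Hin * ρ * timeEvo (-t) Hin)).trace :=
            Matrix.trace_mul_comm _ _
        _ = ∑ k, (((M k)ᴴ * M k) * (timeEvo t Hin * ρ * timeEvo (-t) Hin)).trace := by
            rw [Finset.sum_mul, Matrix.trace_sum]
        _ = ∑ k, ((M k) * (timeEvo t Hin * ρ * timeEvo (-t) Hin) * (M k)ᴴ).trace :=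
            Finset.sum_congr rfl fun k _ => (Matrix.trace_mul_cycle _ _ _).symm
        _ = ((∑ k, M k * (timeEvo t Hin * ρ * timeEvo (-t) Hin) * (M k)ᴴ)).trace :=
            (Matrix.trace_sum _ _).symm
        _ = (timeEvo t Hout * (∑ k, M k * ρ * (M k)ᴴ) * timeEvo (-t) Hout).trace := by
            rw [hcov t ρ]
        _ = ((∑ k, M k * ρ * (M k)ᴴ)).trace := by
            rw [Matrix.trace_mul_cycle, hVV, one_mul]
        _ = ∑ k, (M k * ρ * (M k)ᴴ).trace := Matrix.trace_sum _ _
        _ = ∑ k, (((M k)ᴴ * M k) * ρ).trace :=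
            Finset.sum_congr rfl fun k _ => Matrix.trace_mul_cycle _ _ _
        _ = ((∑ k, (M k)ᴴ * M k) * ρ).trace := by rw [Finset.sum_mul, Matrix.trace_sum]
    have h2 : timeEvo t Hin * (timeEvo (-t) Hin * (∑ k, (M k)ᴴ * M k) * timeEvo t Hin)
        = timeEvo t Hin * (∑ k, (M k)ᴴ * M k) := by rw [hA]
    simp only [← mul_assoc] at h2
    rw [hUU', one_mul] at h2
    exact h2
  refine ⟨commute_of_commute_timeEvo key, ?_⟩
  intro hP S hS hSP
  have hdetS : IsUnit S.det := by
    have h1 : IsUnit (S * S).det := by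
      rw [hSP]; exact (Matrix.isUnit_iff_isUnit_det _).1 hP
    rw [Matrix.det_mul] at h1
    exact isUnit_of_mul_isUnit_left h1
  have hTS : S⁻¹ * S = 1 := Matrix.nonsing_inv_mul S hdetS
  have hST : S * S⁻¹ = 1 := Matrix.mul_nonsing_inv S hdetS
  have hSH : Sᴴ = S := hS.1.eq
  have hTH : (S⁻¹)ᴴ = S⁻¹ := by rw [Matrix.conjTranspose_nonsing_inv, hSH]
  have hScomm : ∀ t : ℝ, timeEvo t Hin * S = S * timeEvo t Hin := by
    intro t
    have hUU' : timeEvo t Hin * timeEvo (-t) Hin = 1 := timeEvo_mul_neg t Hin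
    have hU'U : timeEvo (-t) Hin * timeEvo t Hin = 1 := by
      have := timeEvo_mul_neg (-t) Hin; rwa [neg_neg] at this
    have hUH : (timeEvo t Hin)ᴴ = timeEvo (-t) Hin := timeEvo_conjTranspose hHin
    have cU'U : ∀ X : Matrix (Fin din) (Fin din) ℂ,
        timeEvo (-t) Hin * (timeEvo t Hin * X) = X := fun X => by
      rw [← mul_assoc, hU'U, one_mul]
    have hB : (timeEvo t Hin * S * (timeEvo t Hin)ᴴ).PosSemidef :=
      hS.mul_mul_conjTranspose_same _
    have hsq : (timeEvo t Hin * S * (timeEvo t Hin)ᴴ) ^ 2 = S ^ 2 := by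
      rw [hUH, pow_two, pow_two]
      simp only [Matrix.mul_assoc, cU'U]
      calc timeEvo t Hin * (S * (S * timeEvo (-t) Hin))
          = timeEvo t Hin * ((S * S) * timeEvo (-t) Hin) := by rw [mul_assoc]
        _ = timeEvo t Hin * ((∑ k, (M k)ᴴ * M k) * timeEvo (-t) Hin) := by rw [hSP]
        _ = timeEvo t Hin * (∑ k, (M k)ᴴ * M k) * timeEvo (-t) Hin := by rw [mul_assoc]
        _ = (∑ k, (M k)ᴴ * M k) * timeEvo t Hin * timeEvo (-t) Hin := by rw [← key t]
        _ = (∑ k, (M k)ᴴ * M k) * (timeEvo t Hin * timeEvo (-t) Hin) := by rw [mul_assoc]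
        _ = ∑ k, (M k)ᴴ * M k := by rw [hUU', mul_one]
        _ = S * S := hSP.symm
    have hBS : timeEvo t Hin * S * (timeEvo t Hin)ᴴ = S := psd_eq_of_sq hB hS hsq
    calc timeEvo t Hin * S
        = timeEvo t Hin * S * ((timeEvo t Hin)ᴴ * timeEvo t Hin) := by
          rw [hUH, hU'U, mul_one]
      _ = (timeEvo t Hin * S * (timeEvo t Hin)ᴴ) * timeEvo t Hin := by
          simp only [Matrix.mul_assoc]
      _ = S * timeEvo t Hin := by rw [hBS]
  have hTcomm : ∀ t : ℝ, timeEvo t Hin * S⁻¹ = S⁻¹ * timeEvo t Hin := by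
    intro t
    calc timeEvo t Hin * S⁻¹
        = (S⁻¹ * S) * (timeEvo t Hin * S⁻¹) := by rw [hTS, one_mul]
      _ = S⁻¹ * (S * timeEvo t Hin) * S⁻¹ := by simp only [Matrix.mul_assoc]
      _ = S⁻¹ * (timeEvo t Hin * S) * S⁻¹ := by rw [← hScomm t]
      _ = S⁻¹ * timeEvo t Hin * (S * S⁻¹) := by simp only [Matrix.mul_assoc]
      _ = S⁻¹ * timeEvo t Hin := by rw [hST, mul_one]
  have c1 : ∀ {m : ℕ} (X : Matrix (Fin din) (Fin m) ℂ), S⁻¹ * (S * X) = X := fun X => by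
    rw [← Matrix.mul_assoc, hTS, Matrix.one_mul]
  have c2 : ∀ {m : ℕ} (X : Matrix (Fin din) (Fin m) ℂ), S * (S⁻¹ * X) = X := fun X => by
    rw [← Matrix.mul_assoc, hST, Matrix.one_mul]
  refine ⟨K, fun j => M j * S⁻¹, ?_, ?_, ?_⟩
  · calc ∑ j, (M j * S⁻¹)ᴴ * (M j * S⁻¹)
        = S⁻¹ * ((∑ k, (M k)ᴴ * M k) * S⁻¹) := by
          rw [Finset.sum_mul, Finset.mul_sum]
          exact Finset.sum_congr rfl fun j _ => by
            rw [conjTranspose_mul, hTH]; simp only [Matrix.mul_assoc]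
      _ = S⁻¹ * ((S * S) * S⁻¹) := by rw [← hSP]
      _ = 1 := by rw [mul_assoc, hST, mul_one, hTS]
  · intro t ρ
    have e1 : ∀ j, (M j * S⁻¹) * (timeEvo t Hin * ρ * timeEvo (-t) Hin) * (M j * S⁻¹)ᴴ
        = M j * (timeEvo t Hin * (S⁻¹ * ρ * S⁻¹) * timeEvo (-t) Hin) * (M j)ᴴ := by
      intro j
      rw [conjTranspose_mul, hTH]
      have e2 : S⁻¹ * (timeEvo t Hin * ρ * timeEvo (-t) Hin) * S⁻¹
          = timeEvo t Hin * (S⁻¹ * ρ * S⁻¹) * timeEvo (-t) Hin := by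
        calc S⁻¹ * (timeEvo t Hin * ρ * timeEvo (-t) Hin) * S⁻¹
            = (S⁻¹ * timeEvo t Hin) * ρ * (timeEvo (-t) Hin * S⁻¹) := by
              simp only [Matrix.mul_assoc]
          _ = (timeEvo t Hin * S⁻¹) * ρ * (S⁻¹ * timeEvo (-t) Hin) := by
              rw [← hTcomm t, hTcomm (-t)]
          _ = timeEvo t Hin * (S⁻¹ * ρ * S⁻¹) * timeEvo (-t) Hin := by
              simp only [Matrix.mul_assoc]
      calc M j * S⁻¹ * (timeEvo t Hin * ρ * timeEvo (-t) Hin) * (S⁻¹ * (M j)ᴴ)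
          = M j * (S⁻¹ * (timeEvo t Hin * ρ * timeEvo (-t) Hin) * S⁻¹) * (M j)ᴴ := by
            simp only [Matrix.mul_assoc]
        _ = M j * (timeEvo t Hin * (S⁻¹ * ρ * S⁻¹) * timeEvo (-t) Hin) * (M j)ᴴ := by
            rw [e2]
    have e3 : ∀ j, M j * (S⁻¹ * ρ * S⁻¹) * (M j)ᴴ
        = (M j * S⁻¹) * ρ * (M j * S⁻¹)ᴴ := by
      intro j
      rw [conjTranspose_mul, hTH]
      simp only [Matrix.mul_assoc]
    simp only [e1]
    rw [hcov t (S⁻¹ * ρ * S⁻¹)]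
    simp only [e3]
  · intro ρ
    refine Finset.sum_congr rfl fun j _ => ?_
    rw [conjTranspose_mul, hTH]
    simp only [Matrix.mul_assoc, c1, c2]
end

section
/- Let H be a Hermitian d×d matrix and let ℳ(ρ) = ∑_{k=1}^K M_k ρ M_k† be a quantum operation (∑_k M_k† M_k ≤ I) whose Kraus operators all commute with H. Set P = ∑_k M_k† M_k. Then P (hence also √P) commutes with H, and if P is invertible there exists a quantum channel 𝒞(ρ) = ∑_j C_j ρ C_j† (with ∑_j C_j† C_j = I) whose Kraus operators C_j all commute with H, such that ℳ(ρ) = 𝒞( √P ρ √P ) for every d×d matrix ρ. -/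
open Matrix
open scoped ComplexOrder

/-- If `S` is positive semidefinite and `S * S` commutes with `H`, then `S` commutes with `H`. -/
lemma psd_commute_of_sq_commute {d : ℕ} {S H : Matrix (Fin d) (Fin d) ℂ}
    (hS : S.PosSemidef) (h : (S * S) * H = H * (S * S)) : S * H = H * S := by
  classical
  set U : Matrix (Fin d) (Fin d) ℂ := (hS.1.eigenvectorUnitary : Matrix (Fin d) (Fin d) ℂ) with hU
  have hU1 : star U * U = 1 := Unitary.coe_star_mul_self _
  have hU2 : U * star U = 1 := Unitary.coe_mul_star_self _
  have hc1 : ∀ X : Matrix (Fin d) (Fin d) ℂ, star U * (U * X) = X := fun X => by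
    rw [← mul_assoc, hU1, one_mul]
  have hc2 : ∀ X : Matrix (Fin d) (Fin d) ℂ, U * (star U * X) = X := fun X => by
    rw [← mul_assoc, hU2, one_mul]
  set μ : Fin d → ℝ := hS.1.eigenvalues with hμ
  set D : Matrix (Fin d) (Fin d) ℂ := diagonal (fun i => (μ i : ℂ)) with hD
  have hspec : S = U * D * star U := by
    simpa [hU, hD, Function.comp_def] using hS.1.spectral_theorem
  set B : Matrix (Fin d) (Fin d) ℂ := star U * H * U with hB
  have hHB : H = U * B * star U := by
    simp only [hB, mul_assoc, hc2]
    rw [hU2, mul_one]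
  have hcanc : ∀ X Y : Matrix (Fin d) (Fin d) ℂ,
      U * X * star U = U * Y * star U → X = Y := by
    intro X Y hXY
    have h' := congrArg (fun Z => star U * Z * U) hXY
    simpa only [mul_assoc, hc1, hU1, mul_one] using h'
  have hmul : ∀ X Y : Matrix (Fin d) (Fin d) ℂ,
      (U * X * star U) * (U * Y * star U) = U * (X * Y) * star U := by
    intro X Y
    simp only [mul_assoc, hc1]
  -- `D * D` commutes with `B`
  have hSS : S * S = U * (D * D) * star U := by
    rw [hspec, hmul]
  have hDB : (D * D) * B = B * (D * D) := by
    apply hcanc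
    calc U * ((D * D) * B) * star U
        = (U * (D * D) * star U) * (U * B * star U) := (hmul _ _).symm
      _ = (S * S) * H := by rw [← hSS, ← hHB]
      _ = H * (S * S) := h
      _ = (U * B * star U) * (U * (D * D) * star U) := by rw [hSS, hHB]
      _ = U * (B * (D * D)) * star U := hmul _ _
  -- entrywise, deduce `D` commutes with `B`
  have hentry : ∀ i j, (μ i : ℂ) * B i j = B i j * (μ j : ℂ) := by
    intro i j
    have h1 : ((μ i : ℂ) * (μ i : ℂ)) * B i j = B i j * ((μ j : ℂ) * (μ j : ℂ)) := by
      have := congrFun (congrFun hDB i) j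
      rwa [show D * D * B = diagonal (fun i => (μ i :ℂ) * (μ i : ℂ)) * B by
            rw [hD, diagonal_mul_diagonal],
          show B * (D * D) = B * diagonal (fun i => (μ i :ℂ) * (μ i : ℂ)) by
            rw [hD, diagonal_mul_diagonal],
          diagonal_mul, mul_diagonal] at this
    by_cases hB0 : B i j = 0
    · simp [hB0]
    · have hsq : (μ i : ℂ) * (μ i : ℂ) = (μ j : ℂ) * (μ j : ℂ) := by
        rw [mul_comm (B i j)] at h1
        exact mul_right_cancel₀ hB0 h1
      have hsqR : μ i * μ i = μ j * μ j := by exact_mod_cast hsq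
      have hij : μ i = μ j := by
        nlinarith [hS.eigenvalues_nonneg i, hS.eigenvalues_nonneg j]
      rw [hij, mul_comm]
  have hDB' : D * B = B * D := by
    ext i j
    rw [hD, diagonal_mul, mul_diagonal]
    exact hentry i j
  -- conclude
  calc S * H = U * D * star U * (U * B * star U) := by rw [← hspec, ← hHB]
    _ = U * ((D * B) * star U) := by simp only [mul_assoc, hc1]
    _ = U * ((B * D) * star U) := by rw [hDB']
    _ = (U * B * star U) * (U * D * star U) := by simp only [mul_assoc, hc1]
    _ = H * S := by rw [← hspec, ← hHB]

/-- **Lüders decomposition of an energy-preserving quantum operation.** If all Kraus operators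
of `ℳ(ρ) = ∑ k, M k ρ (M k)ᴴ` (with `∑ k, (M k)ᴴ M k ≤ 1`) commute with the Hermitian `H`, then
`P = ∑ k, (M k)ᴴ M k` and its positive square root `√P` commute with `H`, and when `P` is
invertible there is an energy-preserving quantum channel `𝒞` with `ℳ(ρ) = 𝒞(√P ρ √P)`. -/
theorem stmt_7 {d K : ℕ}
    (H : Matrix (Fin d) (Fin d) ℂ) (hH : H.IsHermitian)
    (M : Fin K → Matrix (Fin d) (Fin d) ℂ)
    (hsub : ((1 : Matrix (Fin d) (Fin d) ℂ) - ∑ k, (M k)ᴴ * M k).PosSemidef)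
    (hComm : ∀ k, M k * H = H * M k) :
    (∑ k, (M k)ᴴ * M k) * H = H * (∑ k, (M k)ᴴ * M k) ∧
    ∀ S : Matrix (Fin d) (Fin d) ℂ, S.PosSemidef → S * S = ∑ k, (M k)ᴴ * M k →
      (S * H = H * S ∧
        (IsUnit (∑ k, (M k)ᴴ * M k) →
          ∃ (J : ℕ) (C : Fin J → Matrix (Fin d) (Fin d) ℂ),
            (∑ j, (C j)ᴴ * C j = 1) ∧ (∀ j, C j * H = H * C j) ∧
            ∀ ρ : Matrix (Fin d) (Fin d) ℂ,
              ∑ k, M k * ρ * (M k)ᴴ = ∑ j, C j * (S * ρ * S) * (C j)ᴴ)) := by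
  classical
  have hCommT : ∀ k, (M k)ᴴ * H = H * (M k)ᴴ := by
    intro k
    have := congrArg conjTranspose (hComm k)
    simpa [conjTranspose_mul, hH.eq] using this.symm
  have hPH : (∑ k, (M k)ᴴ * M k) * H = H * (∑ k, (M k)ᴴ * M k) := by
    rw [Finset.sum_mul, Finset.mul_sum]
    refine Finset.sum_congr rfl fun k _ => ?_
    rw [mul_assoc, hComm k, ← mul_assoc, hCommT k, mul_assoc]
  refine ⟨hPH, fun S hS hSP => ?_⟩
  have hSH : S * H = H * S := psd_commute_of_sq_commute hS (by rw [hSP]; exact hPH)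
  refine ⟨hSH, fun hPunit => ?_⟩
  have hSdet : IsUnit S.det := by
    rw [← hSP] at hPunit
    have hdet : IsUnit (S.det * S.det) := by
      simpa [Matrix.det_mul] using (Matrix.isUnit_iff_isUnit_det _).mp hPunit
    exact isUnit_of_mul_isUnit_left hdet
  have hSinv : S * S⁻¹ = 1 := Matrix.mul_nonsing_inv S hSdet
  have hSinv' : S⁻¹ * S = 1 := Matrix.nonsing_inv_mul S hSdet
  have hSinvH : S⁻¹ᴴ = S⁻¹ := by
    rw [Matrix.conjTranspose_nonsing_inv, hS.1.eq]
  have hSinvComm : S⁻¹ * H = H * S⁻¹ := by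
    have := congrArg (fun X => S⁻¹ * X * S⁻¹) hSH
    simp only [mul_assoc] at this
    rw [hSinv] at this
    simpa [← mul_assoc, hSinv', hSinv, mul_one, one_mul] using this.symm
  refine ⟨K, fun k => M k * S⁻¹, ?_, ?_, ?_⟩
  · have heq : ∑ j, ((fun k => M k * S⁻¹) j)ᴴ * ((fun k => M k * S⁻¹) j)
        = S⁻¹ * (∑ k, (M k)ᴴ * M k) * S⁻¹ := by
      rw [Finset.mul_sum, Finset.sum_mul]
      refine Finset.sum_congr rfl fun k _ => ?_
      simp [conjTranspose_mul, hSinvH, mul_assoc]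
    rw [heq, ← hSP, ← mul_assoc S⁻¹ S S, hSinv', one_mul, hSinv]
  · intro j
    rw [mul_assoc, hSinvComm, ← mul_assoc, hComm j, mul_assoc]
  · intro ρ
    refine Finset.sum_congr rfl fun k _ => ?_
    simp only [conjTranspose_mul, hSinvH]
    calc M k * ρ * (M k)ᴴ
        = M k * ((S⁻¹ * S) * ρ * (S * S⁻¹)) * (M k)ᴴ := by rw [hSinv', hSinv]; simp
      _ = M k * S⁻¹ * (S * ρ * S) * (S⁻¹ * (M k)ᴴ) := by simp only [mul_assoc]
end

section
/- Let H be a Hermitian d×d matrix with spectral projections P_E, and let φ, ψ ∈ ℂ^d be unit vectors with p_E = ‖P_E φ‖² and q_E = ‖P_E ψ‖². Then: (i) for every quantum channel ℳ(ρ) = ∑_k M_k ρ M_k† whose Kraus operators all commute with H, the fidelity satisfies ⟨ψ| ℳ(|φ⟩⟨φ|) |ψ⟩ ≤ ( ∑_E √(p_E q_E) )², where the sum runs over the eigenvalues E of H; and (ii) there exists a unitary U commuting with H such that |⟨ψ| U φ⟩|² = ( ∑_E √(p_E q_E) )², so the bound is attained by a unitary energy-preserving channel. -/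
open Matrix
open scoped ComplexOrder

/-- `wt P v = ‖P v‖²`, the weight of the vector `v` on the range of `P`. -/
noncomputable def wt {d : ℕ} (P : Matrix (Fin d) (Fin d) ℂ) (v : Fin d → ℂ) : ℝ :=
  (star (P *ᵥ v) ⬝ᵥ (P *ᵥ v)).re

namespace Stmt8

variable {d : ℕ}

lemma dot_self_eq_sum (v : Fin d → ℂ) :
    star v ⬝ᵥ v = ((∑ i, Complex.normSq (v i) : ℝ) : ℂ) := by
  push_cast
  simp only [dotProduct, Pi.star_apply]
  exact Finset.sum_congr rfl fun i _ => by
    rw [mul_comm]; exact Complex.mul_conj _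

lemma re_dot_self (v : Fin d → ℂ) : (star v ⬝ᵥ v).re = ∑ i, Complex.normSq (v i) := by
  rw [dot_self_eq_sum]; exact Complex.ofReal_re _

lemma re_dot_self_nonneg (v : Fin d → ℂ) : 0 ≤ (star v ⬝ᵥ v).re := by
  rw [re_dot_self]; exact Finset.sum_nonneg fun i _ => Complex.normSq_nonneg _

lemma dot_self_re (v : Fin d → ℂ) : (((star v ⬝ᵥ v).re : ℝ) : ℂ) = star v ⬝ᵥ v := by
  rw [re_dot_self, ← dot_self_eq_sum]

lemma eq_zero_of_dot_self {v : Fin d → ℂ} (h : (star v ⬝ᵥ v).re = 0) : v = 0 := by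
  rw [re_dot_self] at h
  funext i
  have := (Finset.sum_eq_zero_iff_of_nonneg (fun i _ => Complex.normSq_nonneg (v i))).mp h i
    (Finset.mem_univ i)
  simpa using Complex.normSq_eq_zero.mp this

lemma conj_dot (x y : Fin d → ℂ) :
    (starRingEnd ℂ) (star x ⬝ᵥ y) = star y ⬝ᵥ x := by
  simp only [dotProduct, map_sum, Pi.star_apply, _root_.map_mul]
  exact Finset.sum_congr rfl fun i _ => by
    simp [Complex.conj_conj, mul_comm]

lemma cs (x y : Fin d → ℂ) :
    ‖star x ⬝ᵥ y‖ ≤ Real.sqrt (star x ⬝ᵥ x).re * Real.sqrt (star y ⬝ᵥ y).re := by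
  have h := norm_inner_le_norm (𝕜 := ℂ)
    ((WithLp.equiv 2 (Fin d → ℂ)).symm x) ((WithLp.equiv 2 (Fin d → ℂ)).symm y)
  rw [EuclideanSpace.inner_toLp_toLp] at h
  have hn : ∀ v : Fin d → ℂ,
      ‖(WithLp.equiv 2 (Fin d → ℂ)).symm v‖ = Real.sqrt (star v ⬝ᵥ v).re := by
    intro v
    rw [EuclideanSpace.norm_eq, re_dot_self]
    congr 1
    exact Finset.sum_congr rfl fun i _ => by
      simp [Complex.normSq_eq_norm_sq, sq]
  rw [hn, hn] at h
  rw [dotProduct_comm]; exact h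

lemma adj_dot (A : Matrix (Fin d) (Fin d) ℂ) (x y : Fin d → ℂ) :
    star x ⬝ᵥ (A *ᵥ y) = star (Aᴴ *ᵥ x) ⬝ᵥ y := by
  rw [star_mulVec, conjTranspose_conjTranspose, dotProduct_mulVec]

lemma vecMulVec_mulVec' (a b x : Fin d → ℂ) :
    vecMulVec a b *ᵥ x = (b ⬝ᵥ x) • a := by
  ext i
  simp [mulVec, vecMulVec_apply, dotProduct, Finset.mul_sum, mul_assoc, mul_comm, mul_left_comm]

lemma mul_vecMulVec (M : Matrix (Fin d) (Fin d) ℂ) (a b : Fin d → ℂ) :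
    M * vecMulVec a b = vecMulVec (M *ᵥ a) b := by
  ext i j
  simp [mul_apply, vecMulVec_apply, mulVec, dotProduct, Finset.sum_mul, mul_assoc]

lemma vecMulVec_mul' (a b : Fin d → ℂ) (M : Matrix (Fin d) (Fin d) ℂ) :
    vecMulVec a b * M = vecMulVec a (b ᵥ* M) := by
  ext i j
  simp [mul_apply, vecMulVec_apply, vecMul, dotProduct, Finset.mul_sum, mul_assoc]

lemma smul_vecMulVec (s : ℂ) (a b : Fin d → ℂ) :
    vecMulVec (s • a) b = s • vecMulVec a b := by
  ext i j
  simp [vecMulVec_apply, mul_assoc]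

lemma sum_mulVec' {ι : Type} [Fintype ι] (A : ι → Matrix (Fin d) (Fin d) ℂ) (v : Fin d → ℂ) :
    (∑ i, A i) *ᵥ v = ∑ i, A i *ᵥ v := by
  ext j
  simp only [mulVec, dotProduct, Finset.sum_apply, Matrix.sum_apply, Finset.sum_mul]
  exact Finset.sum_comm

lemma dotProduct_sum' {ι : Type} [Fintype ι] (u : Fin d → ℂ) (v : ι → Fin d → ℂ) :
    u ⬝ᵥ (∑ i, v i) = ∑ i, u ⬝ᵥ v i := by
  simp only [dotProduct, Finset.sum_apply, Finset.mul_sum]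
  exact Finset.sum_comm


lemma keyreal {ι K : Type} [Fintype ι] [Fintype K] (a : K → ι → ℝ) (p q : ι → ℝ)
    (ha : ∀ k i, 0 ≤ a k i) (hq : ∀ i, 0 ≤ q i)
    (hsum : ∀ i, ∑ k, (a k i) ^ 2 = p i) :
    ∑ k, (∑ i, a k i * Real.sqrt (q i)) ^ 2 ≤ (∑ i, Real.sqrt (p i * q i)) ^ 2 := by
  have hp : ∀ i, 0 ≤ p i := fun i => (hsum i) ▸ Finset.sum_nonneg fun k _ => sq_nonneg _
  have ha0 : ∀ k i, p i = 0 → a k i = 0 := by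
    intro k i hpi
    have h0 : ∑ k, (a k i) ^ 2 = 0 := (hsum i).trans hpi
    have := (Finset.sum_eq_zero_iff_of_nonneg (fun k _ => sq_nonneg (a k i))).mp h0 k
      (Finset.mem_univ k)
    exact (pow_eq_zero_iff two_ne_zero).mp this
  set S : ℝ := ∑ i, Real.sqrt (p i * q i) with hS
  have hS0 : 0 ≤ S := Finset.sum_nonneg fun i _ => Real.sqrt_nonneg _
  set X : K → ι → ℝ := fun k i =>
    a k i * (Real.sqrt (Real.sqrt (q i)) / Real.sqrt (Real.sqrt (p i))) with hX
  have hXy : ∀ k i, a k i * Real.sqrt (q i) = X k i * Real.sqrt (Real.sqrt (p i * q i)) := by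
    intro k i
    by_cases hpi : p i = 0
    · rw [ha0 k i hpi, hX, hpi]; simp
    · have hpi' : 0 < p i := lt_of_le_of_ne (hp i) (Ne.symm hpi)
      have h4 : Real.sqrt (Real.sqrt (p i * q i))
          = Real.sqrt (Real.sqrt (p i)) * Real.sqrt (Real.sqrt (q i)) := by
        rw [Real.sqrt_mul (hp i), Real.sqrt_mul (Real.sqrt_nonneg _)]
      have h4p : 0 < Real.sqrt (Real.sqrt (p i)) :=
        Real.sqrt_pos.mpr (Real.sqrt_pos.mpr hpi')
      have hqq : Real.sqrt (Real.sqrt (q i)) * Real.sqrt (Real.sqrt (q i)) = Real.sqrt (q i) :=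
        Real.mul_self_sqrt (Real.sqrt_nonneg _)
      have key : X k i * (Real.sqrt (Real.sqrt (p i)) * Real.sqrt (Real.sqrt (q i)))
          = a k i * ((Real.sqrt (Real.sqrt (q i)) * Real.sqrt (Real.sqrt (q i)))
            * (Real.sqrt (Real.sqrt (p i)) / Real.sqrt (Real.sqrt (p i)))) := by
        rw [hX]; ring
      rw [h4, key, hqq, div_self (ne_of_gt h4p), mul_one]
  have hXsum : ∑ k, ∑ i, (X k i) ^ 2 = S := by
    rw [Finset.sum_comm, hS]
    refine Finset.sum_congr rfl fun i _ => ?_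
    have : ∑ k, (X k i) ^ 2
        = (∑ k, (a k i) ^ 2) * (Real.sqrt (Real.sqrt (q i)) / Real.sqrt (Real.sqrt (p i))) ^ 2 := by
      rw [Finset.sum_mul]
      exact Finset.sum_congr rfl fun k _ => by rw [hX]; ring
    rw [this, hsum]
    by_cases hpi : p i = 0
    · simp [hpi]
    · have hpi' : 0 < p i := lt_of_le_of_ne (hp i) (Ne.symm hpi)
      rw [div_pow, Real.sq_sqrt (Real.sqrt_nonneg _), Real.sq_sqrt (Real.sqrt_nonneg _),
        Real.sqrt_mul (hp i)]
      have hne : Real.sqrt (p i) ≠ 0 := ne_of_gt (Real.sqrt_pos.mpr hpi')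
      rw [show p i = Real.sqrt (p i) * Real.sqrt (p i) from (Real.mul_self_sqrt (hp i)).symm]
      field_simp
      rw [Real.sq_sqrt (sq_nonneg (Real.sqrt (p i)))]
      nlinarith [Real.sq_sqrt (hp i), Real.sqrt_nonneg (q i), Real.mul_self_sqrt (hp i)]
  calc ∑ k, (∑ i, a k i * Real.sqrt (q i)) ^ 2
      ≤ ∑ k, (∑ i, (X k i) ^ 2) * S := by
        refine Finset.sum_le_sum fun k _ => ?_
        have := Finset.sum_mul_sq_le_sq_mul_sq Finset.univ (X k)
          (fun i => Real.sqrt (Real.sqrt (p i * q i)))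
        calc (∑ i, a k i * Real.sqrt (q i)) ^ 2
            = (∑ i, X k i * Real.sqrt (Real.sqrt (p i * q i))) ^ 2 := by
              congr 1; exact Finset.sum_congr rfl fun i _ => hXy k i
          _ ≤ (∑ i, (X k i) ^ 2) * ∑ i, Real.sqrt (Real.sqrt (p i * q i)) ^ 2 := this
          _ = (∑ i, (X k i) ^ 2) * S := by
              congr 1
              exact Finset.sum_congr rfl fun i _ => Real.sq_sqrt (Real.sqrt_nonneg _)
    _ = (∑ k, ∑ i, (X k i) ^ 2) * S := by rw [Finset.sum_mul]
    _ = S * S := by rw [hXsum]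
    _ = S ^ 2 := (sq S).symm


lemma householder (Q : Matrix (Fin d) (Fin d) ℂ) (hQH : Qᴴ = Q) (hQ2 : Q * Q = Q)
    (u v : Fin d → ℂ) (hu : Q *ᵥ u = u) (hv : Q *ᵥ v = v)
    (hu1 : star u ⬝ᵥ u = 1) (hv1 : star v ⬝ᵥ v = 1) :
    ∃ A : Matrix (Fin d) (Fin d) ℂ,
      Aᴴ * A = Q ∧ A * Aᴴ = Q ∧ Q * A * Q = A ∧ star v ⬝ᵥ (A *ᵥ u) = 1 := by
  classical
  set c : ℂ := star u ⬝ᵥ v with hc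
  set z : ℂ := if c = 0 then 1 else ((‖c‖ : ℝ) : ℂ) / c with hz
  have hzc : z * c = ((‖c‖ : ℝ) : ℂ) := by
    by_cases h : c = 0
    · simp [hz, h]
    · rw [hz, if_neg h, div_mul_cancel₀ _ h]
  have hzz : (starRingEnd ℂ) z * z = 1 := by
    by_cases h : c = 0
    · simp [hz, h]
    · rw [hz, if_neg h]
      have habs : ‖((‖c‖ : ℝ) : ℂ) / c‖ = 1 := by
        rw [norm_div, Complex.norm_real, norm_norm,
          div_self (norm_ne_zero_iff.mpr h)]
      calc (starRingEnd ℂ) (((‖c‖ : ℝ) : ℂ) / c) * (((‖c‖ : ℝ) : ℂ) / c)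
          = ((Complex.normSq (((‖c‖ : ℝ) : ℂ) / c) : ℝ) : ℂ) := by
            rw [mul_comm]; exact Complex.mul_conj _
        _ = 1 := by rw [← Complex.sq_norm, habs]; norm_num
  set t : Fin d → ℂ := z • v with ht
  have hQt : Q *ᵥ t = t := by rw [ht, mulVec_smul, hv]
  have hut : star u ⬝ᵥ t = ((‖c‖ : ℝ) : ℂ) := by
    rw [ht, dotProduct_smul, ← hc, smul_eq_mul, hzc]
  have htu : star t ⬝ᵥ u = ((‖c‖ : ℝ) : ℂ) := by
    have h := conj_dot u t
    rw [hut] at h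
    rw [← h, Complex.conj_ofReal]
  have htt : star t ⬝ᵥ t = 1 := by
    rw [ht, star_smul, smul_dotProduct, dotProduct_smul, hv1]
    simpa [smul_eq_mul] using hzz
  set δ : Fin d → ℂ := u - t with hδ
  have hQδ : Q *ᵥ δ = δ := by rw [hδ, mulVec_sub, hu, hQt]
  have hsδ : star δ = star u - star t := by rw [hδ]; exact star_sub u t
  have hδδ : star δ ⬝ᵥ δ = ((2 - 2 * ‖c‖ : ℝ) : ℂ) := by
    rw [hδ, hsδ, sub_dotProduct, dotProduct_sub, dotProduct_sub, hu1, hut, htu, htt]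
    push_cast
    ring
  set n : ℝ := 2 - 2 * ‖c‖ with hn
  set κ : ℂ := ((2 / n : ℝ) : ℂ) with hκ
  set D : Matrix (Fin d) (Fin d) ℂ := vecMulVec δ (star δ) with hD
  have hδu : star δ ⬝ᵥ u = ((1 - ‖c‖ : ℝ) : ℂ) := by
    rw [hsδ, sub_dotProduct, hu1, htu]
    push_cast; ring
  have hDH : Dᴴ = D := by
    rw [hD]
    ext i j
    simp only [conjTranspose_apply, vecMulVec_apply, Pi.star_apply, star_mul', star_star]
    ring
  have hQD : Q * D = D := by rw [hD, mul_vecMulVec, hQδ]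
  have hDQ : D * Q = D := by
    rw [hD, vecMulVec_mul']
    congr 1
    have : star δ ᵥ* Q = star (Qᴴ *ᵥ δ) := by rw [star_mulVec, conjTranspose_conjTranspose]
    rw [this, hQH, hQδ]
  have hDD : D * D = ((n : ℝ) : ℂ) • D := by
    rw [hD, mul_vecMulVec, vecMulVec_mulVec', hδδ, smul_vecMulVec]
  -- main case split : δ = 0 or n ≠ 0
  have hcase : D = 0 ∨ n ≠ 0 := by
    by_cases h : n = 0
    · left
      have : (star δ ⬝ᵥ δ).re = 0 := by rw [hδδ, h]; simp
      rw [hD, eq_zero_of_dot_self this]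
      ext i j; simp [vecMulVec_apply]
    · right; exact h
  set R : Matrix (Fin d) (Fin d) ℂ := Q - κ • D with hR
  have hRH : Rᴴ = R := by
    rw [hR, conjTranspose_sub, hQH, conjTranspose_smul, hDH, hκ]
    congr 1
    simp [Complex.star_def, Complex.conj_ofReal]
  have hRR : R * R = Q := by
    rcases hcase with h | h
    · rw [hR, h]; simp [hQ2]
    · have expand : R * R = Q - (κ + κ) • D + (κ * κ) • (D * D) := by
        rw [hR]
        rw [Matrix.sub_mul, Matrix.mul_sub, Matrix.mul_sub, hQ2, Matrix.mul_smul, hQD, Matrix.smul_mul, hDQ,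
          Matrix.smul_mul, Matrix.mul_smul, smul_smul, add_smul]
        abel
      rw [expand, hDD, smul_smul]
      have : κ * κ * ((n : ℝ) : ℂ) = κ + κ := by
        rw [hκ]
        push_cast
        field_simp
        ring
      rw [this]
      abel
  have hQRQ : Q * R * Q = R := by
    rw [hR, Matrix.mul_sub, Matrix.mul_smul, hQD, hQ2, Matrix.sub_mul, Matrix.smul_mul, hQ2, hDQ]
  have hRu : R *ᵥ u = t := by
    rcases hcase with h | h
    · have h2 : vecMulVec δ (star δ) = 0 := by rw [← hD]; exact h
      have hδ0 : δ = 0 := by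
        funext i
        have h3 : δ i * star (δ i) = 0 := by
          simpa [vecMulVec_apply] using congrFun (congrFun h2 i) i
        rcases mul_eq_zero.mp h3 with h4 | h4
        · simpa using h4
        · simpa using star_eq_zero.mp h4
      have hut' : u = t := by rwa [hδ, sub_eq_zero] at hδ0
      rw [hR, h, smul_zero, sub_zero, hu, hut']
    · rw [hR, sub_mulVec, hu, Matrix.smul_mulVec, hD, vecMulVec_mulVec', hδu]
      have : κ • (((1 - ‖c‖ : ℝ) : ℂ) • δ) = δ := by
        rw [smul_smul, hκ]
        have hone : ((2 / n : ℝ) : ℂ) * ((1 - ‖c‖ : ℝ) : ℂ) = 1 := by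
          rw [← Complex.ofReal_mul]
          norm_cast
          rw [hn]
          have h1 : (1:ℝ) - ‖c‖ ≠ 0 := by intro h'; apply h; rw [hn]; linarith
          field_simp
        rw [hone, one_smul]
      rw [this, hδ]
      abel
  have hstar : star ((starRingEnd ℂ) z) = z := by
    simp [Complex.star_def, Complex.conj_conj]
  refine ⟨(starRingEnd ℂ) z • R, ?_, ?_, ?_, ?_⟩
  · rw [conjTranspose_smul, hRH, hstar, Matrix.smul_mul, Matrix.mul_smul, smul_smul,
      mul_comm, hzz, one_smul, hRR]
  · rw [conjTranspose_smul, hRH, hstar, Matrix.mul_smul, Matrix.smul_mul, smul_smul,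
      mul_comm, hzz, one_smul, hRR]
  · rw [Matrix.mul_smul, Matrix.smul_mul, hQRQ]
  · rw [Matrix.smul_mulVec, hRu, dotProduct_smul, ht, dotProduct_smul, hv1,
      smul_eq_mul, smul_eq_mul, mul_one, hzz]

end Stmt8
/-- **Optimality of eigenstate alignment.** Let `H` be Hermitian with spectral projections
`P i`, and let `φ, ψ` be unit vectors with `p_E = ‖P_E φ‖²`, `q_E = ‖P_E ψ‖²`. Then (i) every
channel whose Kraus operators commute with `H` has fidelity
`⟨ψ|ℳ(|φ⟩⟨φ|)|ψ⟩ ≤ (∑ E √(p_E q_E))²`, and (ii) some unitary `U` commuting with `H` attains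
`|⟨ψ|Uφ⟩|² = (∑ E √(p_E q_E))²`. -/
theorem stmt_8 {d : ℕ} {ι : Type} [Fintype ι] [DecidableEq ι]
    (H : Matrix (Fin d) (Fin d) ℂ) (hH : H.IsHermitian)
    (E : ι → ℝ) (hE : Function.Injective E)
    (P : ι → Matrix (Fin d) (Fin d) ℂ)
    (hHerm : ∀ i, (P i).IsHermitian)
    (hIdem : ∀ i, P i * P i = P i)
    (hOrth : ∀ i j, i ≠ j → P i * P j = 0)
    (hSum : ∑ i, P i = 1)
    (hSpec : H = ∑ i, (E i : ℂ) • P i)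
    (φ ψ : Fin d → ℂ) (hφ : star φ ⬝ᵥ φ = 1) (hψ : star ψ ⬝ᵥ ψ = 1) :
    (∀ (K : ℕ) (M : Fin K → Matrix (Fin d) (Fin d) ℂ),
      (∑ k, (M k)ᴴ * M k = 1) → (∀ k, M k * H = H * M k) →
      star ψ ⬝ᵥ ((∑ k, M k * vecMulVec φ (star φ) * (M k)ᴴ) *ᵥ ψ) ≤
        (((∑ i, Real.sqrt (wt (P i) φ * wt (P i) ψ)) ^ 2 : ℝ) : ℂ)) ∧
    (∃ U : Matrix (Fin d) (Fin d) ℂ, Uᴴ * U = 1 ∧ U * Uᴴ = 1 ∧ U * H = H * U ∧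
      Complex.normSq (star ψ ⬝ᵥ (U *ᵥ φ)) =
        (∑ i, Real.sqrt (wt (P i) φ * wt (P i) ψ)) ^ 2) := by
  classical
  have hwt : ∀ (Q : Matrix (Fin d) (Fin d) ℂ) (v : Fin d → ℂ),
      wt Q v = (star (Q *ᵥ v) ⬝ᵥ (Q *ᵥ v)).re := fun _ _ => rfl
  have hwt0 : ∀ (Q : Matrix (Fin d) (Fin d) ℂ) (v : Fin d → ℂ), 0 ≤ wt Q v :=
    fun Q v => Stmt8.re_dot_self_nonneg _
  have hHP : ∀ i, H * P i = (E i : ℂ) • P i := by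
    intro i
    rw [hSpec, Finset.sum_mul]
    rw [Finset.sum_eq_single i (fun j _ hj => by
      rw [Matrix.smul_mul, hOrth j i hj, smul_zero]) (by simp)]
    rw [Matrix.smul_mul, hIdem i]
  have hPH : ∀ i, P i * H = (E i : ℂ) • P i := by
    intro i
    rw [hSpec, Finset.mul_sum]
    rw [Finset.sum_eq_single i (fun j _ hj => by
      rw [Matrix.mul_smul, hOrth i j (Ne.symm hj), smul_zero]) (by simp)]
    rw [Matrix.mul_smul, hIdem i]
  have hcross : ∀ (M : Matrix (Fin d) (Fin d) ℂ), M * H = H * M →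
      ∀ i j, i ≠ j → P i * M * P j = 0 := by
    intro M hM i j hij
    have h1 : P i * M * H * P j = (E j : ℂ) • (P i * M * P j) := by
      rw [Matrix.mul_assoc (P i * M) H (P j), hHP j, Matrix.mul_smul]
    have h2 : P i * M * H * P j = (E i : ℂ) • (P i * M * P j) := by
      have e1 : P i * M * H = (E i : ℂ) • (P i * M) := by
        rw [Matrix.mul_assoc, hM, ← Matrix.mul_assoc, hPH i, Matrix.smul_mul]
      rw [e1, Matrix.smul_mul]
    have h3 : ((E i : ℂ) - (E j : ℂ)) • (P i * M * P j) = 0 := by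
      rw [sub_smul, ← h1, ← h2, sub_self]
    have hEne : (E i : ℂ) - (E j : ℂ) ≠ 0 := by
      rw [sub_ne_zero]
      intro hEq
      exact hij (hE (by exact_mod_cast hEq))
    rcases smul_eq_zero.mp h3 with h | h
    · exact absurd h hEne
    · exact h
  have hcomm : ∀ (M : Matrix (Fin d) (Fin d) ℂ), M * H = H * M →
      ∀ i, M * P i = P i * M := by
    intro M hM i
    have e1 : M * P i = P i * M * P i := by
      calc M * P i = (∑ j, P j) * M * P i := by rw [hSum, Matrix.one_mul]
        _ = ∑ j, P j * M * P i := by rw [Finset.sum_mul, Finset.sum_mul]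
        _ = P i * M * P i :=
            Finset.sum_eq_single i (fun j _ hj => hcross M hM j i hj) (by simp)
    have e2 : P i * M = P i * M * P i := by
      calc P i * M = P i * M * ∑ j, P j := by rw [hSum, Matrix.mul_one]
        _ = ∑ j, P i * M * P j := by rw [Finset.mul_sum]
        _ = P i * M * P i :=
            Finset.sum_eq_single i (fun j _ hj => hcross M hM i j (Ne.symm hj)) (by simp)
    rw [e1, ← e2]
  constructor
  · -- part (i)
    intro K M hKraus hcommH
    have hMP : ∀ k i, M k * P i = P i * M k := fun k i => hcomm (M k) (hcommH k) i
    have hLHS : star ψ ⬝ᵥ ((∑ k, M k * vecMulVec φ (star φ) * (M k)ᴴ) *ᵥ ψ)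
        = ((∑ k, Complex.normSq (star ψ ⬝ᵥ (M k *ᵥ φ)) : ℝ) : ℂ) := by
      rw [Stmt8.sum_mulVec', Stmt8.dotProduct_sum']
      push_cast
      refine Finset.sum_congr rfl fun k _ => ?_
      rw [Stmt8.mul_vecMulVec, Stmt8.vecMulVec_mul', ← star_mulVec, Stmt8.vecMulVec_mulVec',
        dotProduct_smul, smul_eq_mul, ← Stmt8.conj_dot ψ (M k *ᵥ φ), mul_comm]
      exact Complex.mul_conj _
    have hz : ∀ k, star ψ ⬝ᵥ (M k *ᵥ φ)
        = ∑ i, star (P i *ᵥ ψ) ⬝ᵥ (M k *ᵥ (P i *ᵥ φ)) := by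
      intro k
      have hMdec : (M k : Matrix (Fin d) (Fin d) ℂ) = ∑ i, P i * (M k * P i) := by
        calc M k = M k * 1 := (Matrix.mul_one _).symm
          _ = M k * ∑ i, P i := by rw [hSum]
          _ = ∑ i, M k * P i := by rw [Finset.mul_sum]
          _ = ∑ i, P i * (M k * P i) := Finset.sum_congr rfl fun i _ => by
              calc M k * P i = M k * (P i * P i) := by rw [hIdem]
                _ = P i * (M k * P i) := by
                    conv_lhs => rw [← Matrix.mul_assoc, hMP k i, Matrix.mul_assoc]
      conv_lhs => rw [hMdec]
      rw [Stmt8.sum_mulVec', Stmt8.dotProduct_sum']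
      refine Finset.sum_congr rfl fun i _ => ?_
      rw [← Matrix.mulVec_mulVec, Stmt8.adj_dot, hHerm i, ← Matrix.mulVec_mulVec]
    set a : Fin K → ι → ℝ :=
      fun k i => Real.sqrt ((star (M k *ᵥ (P i *ᵥ φ)) ⬝ᵥ (M k *ᵥ (P i *ᵥ φ))).re) with hadef
    have habs : ∀ k, ‖star ψ ⬝ᵥ (M k *ᵥ φ)‖
        ≤ ∑ i, a k i * Real.sqrt (wt (P i) ψ) := by
      intro k
      rw [hz k]
      refine le_trans (norm_sum_le _ _) (Finset.sum_le_sum fun i _ => ?_)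
      have h := Stmt8.cs (P i *ᵥ ψ) (M k *ᵥ (P i *ᵥ φ))
      rw [hwt (P i) ψ]
      calc ‖star (P i *ᵥ ψ) ⬝ᵥ (M k *ᵥ (P i *ᵥ φ))‖
          ≤ Real.sqrt ((star (P i *ᵥ ψ) ⬝ᵥ (P i *ᵥ ψ)).re)
            * Real.sqrt ((star (M k *ᵥ (P i *ᵥ φ)) ⬝ᵥ (M k *ᵥ (P i *ᵥ φ))).re) := h
        _ = a k i * Real.sqrt ((star (P i *ᵥ ψ) ⬝ᵥ (P i *ᵥ ψ)).re) := by
            rw [hadef, mul_comm]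
        _ ≤ a k i * Real.sqrt ((star (P i *ᵥ ψ) ⬝ᵥ (P i *ᵥ ψ)).re) := le_refl _
    have hsumk : ∀ i, ∑ k, (a k i) ^ 2 = wt (P i) φ := by
      intro i
      have e : ∀ k, (a k i) ^ 2 = (star (M k *ᵥ (P i *ᵥ φ)) ⬝ᵥ (M k *ᵥ (P i *ᵥ φ))).re :=
        fun k => Real.sq_sqrt (Stmt8.re_dot_self_nonneg _)
      rw [hwt]
      calc ∑ k, (a k i) ^ 2
          = ∑ k, (star (M k *ᵥ (P i *ᵥ φ)) ⬝ᵥ (M k *ᵥ (P i *ᵥ φ))).re :=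
            Finset.sum_congr rfl fun k _ => e k
        _ = (∑ k, star (M k *ᵥ (P i *ᵥ φ)) ⬝ᵥ (M k *ᵥ (P i *ᵥ φ))).re := by
            rw [Complex.re_sum]
        _ = (star (P i *ᵥ φ) ⬝ᵥ (P i *ᵥ φ)).re := by
            congr 1
            calc ∑ k, star (M k *ᵥ (P i *ᵥ φ)) ⬝ᵥ (M k *ᵥ (P i *ᵥ φ))
                = ∑ k, star (P i *ᵥ φ) ⬝ᵥ (((M k)ᴴ * M k) *ᵥ (P i *ᵥ φ)) :=
                  Finset.sum_congr rfl fun k _ => by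
                    symm
                    rw [← Matrix.mulVec_mulVec, Stmt8.adj_dot, conjTranspose_conjTranspose]
              _ = star (P i *ᵥ φ) ⬝ᵥ ((∑ k, (M k)ᴴ * M k) *ᵥ (P i *ᵥ φ)) := by
                  rw [Stmt8.sum_mulVec', Stmt8.dotProduct_sum']
              _ = star (P i *ᵥ φ) ⬝ᵥ (P i *ᵥ φ) := by rw [hKraus, Matrix.one_mulVec]
    rw [hLHS, Complex.real_le_real]
    calc ∑ k, Complex.normSq (star ψ ⬝ᵥ (M k *ᵥ φ))
        ≤ ∑ k, (∑ i, a k i * Real.sqrt (wt (P i) ψ)) ^ 2 := by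
          refine Finset.sum_le_sum fun k _ => ?_
          rw [Complex.normSq_eq_norm_sq]
          exact pow_le_pow_left₀ (norm_nonneg _) (habs k) 2
      _ ≤ (∑ i, Real.sqrt (wt (P i) φ * wt (P i) ψ)) ^ 2 :=
          Stmt8.keyreal a (fun i => wt (P i) φ) (fun i => wt (P i) ψ)
            (fun k i => Real.sqrt_nonneg _) (fun i => hwt0 _ _) hsumk
  · -- part (ii)
    have hA : ∀ i, ∃ A : Matrix (Fin d) (Fin d) ℂ,
        Aᴴ * A = P i ∧ A * Aᴴ = P i ∧ P i * A * P i = A ∧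
        star (P i *ᵥ ψ) ⬝ᵥ (A *ᵥ (P i *ᵥ φ))
          = ((Real.sqrt (wt (P i) φ * wt (P i) ψ) : ℝ) : ℂ) := by
      intro i
      have hPx : P i *ᵥ (P i *ᵥ φ) = P i *ᵥ φ := by
        rw [Matrix.mulVec_mulVec, hIdem]
      have hPy : P i *ᵥ (P i *ᵥ ψ) = P i *ᵥ ψ := by
        rw [Matrix.mulVec_mulVec, hIdem]
      by_cases h0 : wt (P i) φ = 0 ∨ wt (P i) ψ = 0
      · refine ⟨P i, ?_, ?_, ?_, ?_⟩
        · rw [hHerm i, hIdem i]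
        · rw [hHerm i, hIdem i]
        · rw [Matrix.mul_assoc, hIdem i, hIdem i]
        · rcases h0 with h | h
          · have hx0 : P i *ᵥ φ = 0 := Stmt8.eq_zero_of_dot_self h
            rw [hx0]
            simp [h]
          · have hy0 : P i *ᵥ ψ = 0 := Stmt8.eq_zero_of_dot_self h
            rw [hy0]
            simp [h]
      · push_neg at h0
        obtain ⟨hp0, hq0⟩ := h0
        have hp : 0 < wt (P i) φ := lt_of_le_of_ne (hwt0 _ _) (Ne.symm hp0)
        have hq : 0 < wt (P i) ψ := lt_of_le_of_ne (hwt0 _ _) (Ne.symm hq0)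
        have hsp : (0:ℝ) < Real.sqrt (wt (P i) φ) := Real.sqrt_pos.mpr hp
        have hsq : (0:ℝ) < Real.sqrt (wt (P i) ψ) := Real.sqrt_pos.mpr hq
        have hspc : ((Real.sqrt (wt (P i) φ) : ℝ) : ℂ) ≠ 0 := by
          exact_mod_cast ne_of_gt hsp
        have hsqc : ((Real.sqrt (wt (P i) ψ) : ℝ) : ℂ) ≠ 0 := by
          exact_mod_cast ne_of_gt hsq
        set u : Fin d → ℂ := (((Real.sqrt (wt (P i) φ) : ℝ) : ℂ))⁻¹ • (P i *ᵥ φ) with hudef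
        set v : Fin d → ℂ := (((Real.sqrt (wt (P i) ψ) : ℝ) : ℂ))⁻¹ • (P i *ᵥ ψ) with hvdef
        have hu : P i *ᵥ u = u := by rw [hudef, mulVec_smul, hPx]
        have hv : P i *ᵥ v = v := by rw [hvdef, mulVec_smul, hPy]
        have hdotu : star (P i *ᵥ φ) ⬝ᵥ (P i *ᵥ φ) = ((wt (P i) φ : ℝ) : ℂ) :=
          (Stmt8.dot_self_re _).symm
        have hdotv : star (P i *ᵥ ψ) ⬝ᵥ (P i *ᵥ ψ) = ((wt (P i) ψ : ℝ) : ℂ) :=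
          (Stmt8.dot_self_re _).symm
        have hu1 : star u ⬝ᵥ u = 1 := by
          rw [hudef, star_smul, smul_dotProduct, dotProduct_smul, hdotu]
          simp only [smul_eq_mul, star_inv₀, Complex.star_def, Complex.conj_ofReal]
          rw [← Complex.ofReal_inv, ← Complex.ofReal_mul, ← Complex.ofReal_mul]
          norm_cast
          rw [← mul_assoc, ← mul_inv, Real.mul_self_sqrt (le_of_lt hp),
            inv_mul_cancel₀ (ne_of_gt hp)]
        have hv1 : star v ⬝ᵥ v = 1 := by
          rw [hvdef, star_smul, smul_dotProduct, dotProduct_smul, hdotv]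
          simp only [smul_eq_mul, star_inv₀, Complex.star_def, Complex.conj_ofReal]
          rw [← Complex.ofReal_inv, ← Complex.ofReal_mul, ← Complex.ofReal_mul]
          norm_cast
          rw [← mul_assoc, ← mul_inv, Real.mul_self_sqrt (le_of_lt hq),
            inv_mul_cancel₀ (ne_of_gt hq)]
        obtain ⟨A, h1, h2, h3, h4⟩ :=
          Stmt8.householder (P i) (hHerm i) (hIdem i) u v hu hv hu1 hv1
        refine ⟨A, h1, h2, h3, ?_⟩
        have hxx : P i *ᵥ φ = ((Real.sqrt (wt (P i) φ) : ℝ) : ℂ) • u := by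
          rw [hudef, smul_smul, mul_inv_cancel₀ hspc, one_smul]
        have hyy : P i *ᵥ ψ = ((Real.sqrt (wt (P i) ψ) : ℝ) : ℂ) • v := by
          rw [hvdef, smul_smul, mul_inv_cancel₀ hsqc, one_smul]
        rw [hxx, hyy, star_smul, smul_dotProduct, mulVec_smul, dotProduct_smul, h4]
        simp only [smul_eq_mul, mul_one, Complex.star_def, Complex.conj_ofReal]
        rw [← Complex.ofReal_mul]
        norm_cast
        rw [Real.sqrt_mul (le_of_lt hp)]
        ring
    choose A hA1 hA2 hA3 hA4 using hA
    have hsuppH : ∀ i, (A i)ᴴ = P i * (A i)ᴴ * P i := by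
      intro i
      conv_lhs => rw [← hA3 i]
      rw [conjTranspose_mul, conjTranspose_mul, hHerm i, ← Matrix.mul_assoc]
    have hAPj : ∀ i j, i ≠ j → A i * P j = 0 := by
      intro i j hij
      conv_lhs => rw [← hA3 i]
      rw [Matrix.mul_assoc (P i * A i) (P i) (P j), hOrth i j hij, Matrix.mul_zero]
    have hAPi : ∀ i, A i * P i = A i := by
      intro i
      conv_lhs => rw [← hA3 i]
      rw [Matrix.mul_assoc (P i * A i) (P i) (P i), hIdem i, hA3 i]
    have hPAj : ∀ i j, i ≠ j → P i * A j = 0 := by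
      intro i j hij
      conv_lhs => rw [← hA3 j]
      rw [← Matrix.mul_assoc (P i) (P j * A j) (P j), ← Matrix.mul_assoc (P i) (P j) (A j),
        hOrth i j hij, Matrix.zero_mul, Matrix.zero_mul]
    have hPAi : ∀ i, P i * A i = A i := by
      intro i
      conv_lhs => rw [← hA3 i]
      rw [← Matrix.mul_assoc (P i) (P i * A i) (P i), ← Matrix.mul_assoc (P i) (P i) (A i),
        hIdem i, hA3 i]
    refine ⟨∑ i, A i, ?_, ?_, ?_, ?_⟩
    · rw [Matrix.conjTranspose_sum, Finset.sum_mul]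
      calc ∑ i, (A i)ᴴ * ∑ j, A j = ∑ i, ∑ j, (A i)ᴴ * A j := by
            exact Finset.sum_congr rfl fun i _ => Finset.mul_sum _ _ _
        _ = ∑ i, P i := by
            refine Finset.sum_congr rfl fun i _ => ?_
            rw [Finset.sum_eq_single i (fun j _ hj => ?_) (by simp)]
            · exact hA1 i
            · -- (A i)ᴴ * A j = 0, j ≠ i
              conv_lhs => rw [hsuppH i, ← hA3 j]
              have e : (P i * (A i)ᴴ * P i) * (P j * A j * P j)
                  = P i * (A i)ᴴ * (P i * P j * (A j * P j)) := by
                simp only [Matrix.mul_assoc]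
              rw [e, hOrth i j (Ne.symm hj), Matrix.zero_mul, Matrix.mul_zero]
        _ = 1 := hSum
    · rw [Matrix.conjTranspose_sum, Finset.sum_mul]
      calc ∑ i, A i * ∑ j, (A j)ᴴ = ∑ i, ∑ j, A i * (A j)ᴴ := by
            exact Finset.sum_congr rfl fun i _ => Finset.mul_sum _ _ _
        _ = ∑ i, P i := by
            refine Finset.sum_congr rfl fun i _ => ?_
            rw [Finset.sum_eq_single i (fun j _ hj => ?_) (by simp)]
            · exact hA2 i
            · conv_lhs => rw [← hA3 i, hsuppH j]
              have e : (P i * A i * P i) * (P j * (A j)ᴴ * P j)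
                  = P i * A i * (P i * P j * ((A j)ᴴ * P j)) := by
                simp only [Matrix.mul_assoc]
              rw [e, hOrth i j (Ne.symm hj), Matrix.zero_mul, Matrix.mul_zero]
        _ = 1 := hSum
    · have hUH : (∑ i, A i) * H = ∑ j, (E j : ℂ) • A j := by
        rw [hSpec, Finset.mul_sum]
        refine Finset.sum_congr rfl fun j _ => ?_
        rw [Matrix.mul_smul, Finset.sum_mul]
        congr 1
        rw [Finset.sum_eq_single j (fun i _ hi => hAPj i j hi) (by simp)]
        exact hAPi j
      have hHU : H * (∑ i, A i) = ∑ j, (E j : ℂ) • A j := by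
        rw [hSpec, Finset.sum_mul]
        refine Finset.sum_congr rfl fun j _ => ?_
        rw [Matrix.smul_mul, Finset.mul_sum]
        congr 1
        rw [Finset.sum_eq_single j (fun i _ hi => hPAj j i (Ne.symm hi)) (by simp)]
        exact hPAi j
      rw [hUH, hHU]
    · have hdot : star ψ ⬝ᵥ ((∑ i, A i) *ᵥ φ)
          = ((∑ i, Real.sqrt (wt (P i) φ * wt (P i) ψ) : ℝ) : ℂ) := by
        rw [Stmt8.sum_mulVec', Stmt8.dotProduct_sum']
        push_cast
        refine Finset.sum_congr rfl fun i _ => ?_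
        conv_lhs => rw [← hA3 i]
        rw [← Matrix.mulVec_mulVec, ← Matrix.mulVec_mulVec, Stmt8.adj_dot, hHerm i]
        exact hA4 i
      rw [hdot, Complex.normSq_ofReal, sq]
end

section
/- Let H be a Hermitian d×d matrix with spectral projections P_E, and let φ, ψ ∈ ℂ^d be unit vectors with p_E = ‖P_E φ‖², q_E = ‖P_E ψ‖², Sp(φ) = {E : p_E ≠ 0}, Sp(ψ) = {E : q_E ≠ 0}. Then for every quantum operation ℳ(ρ) = ∑_k M_k ρ M_k† whose Kraus operators commute with H and with Tr[ℳ(|φ⟩⟨φ|)] > 0, the normalized fidelity satisfies ⟨ψ| ℳ(|φ⟩⟨φ|) |ψ⟩ / Tr[ ℳ(|φ⟩⟨φ|) ] ≤ ∑_{E ∈ Sp(φ) ∩ Sp(ψ)} q_E. Moreover, if Sp(φ) ∩ Sp(ψ) is nonempty, this bound F_max = ∑_{E ∈ Sp(φ) ∩ Sp(ψ)} q_E is attained by some quantum operation with a single Kraus operator commuting with H. -/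
open Matrix
open scoped ComplexOrder Classical

namespace StmtAux
variable {d : ℕ}

noncomputable def nsq (v : Fin d → ℂ) : ℝ := ∑ i, Complex.normSq (v i)

lemma dot_self_eq (v : Fin d → ℂ) : star v ⬝ᵥ v = (nsq v : ℂ) := by
  simp [dotProduct, nsq, Complex.normSq_eq_conj_mul_self, Pi.star_apply]

lemma nsq_nonneg (v : Fin d → ℂ) : 0 ≤ nsq v :=
  Finset.sum_nonneg fun _ _ => Complex.normSq_nonneg _

lemma nsq_eq_zero {v : Fin d → ℂ} (h : nsq v = 0) : v = 0 := by
  funext i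
  have := (Finset.sum_eq_zero_iff_of_nonneg (fun j _ => Complex.normSq_nonneg (v j))).mp h i (Finset.mem_univ i)
  simpa using Complex.normSq_eq_zero.mp this

lemma wt_eq (P : Matrix (Fin d) (Fin d) ℂ) (v : Fin d → ℂ) : wt P v = nsq (P *ᵥ v) := by
  rw [wt, dot_self_eq]; simp

lemma wt_nonneg (P : Matrix (Fin d) (Fin d) ℂ) (v : Fin d → ℂ) : 0 ≤ wt P v := by
  rw [wt_eq]; exact nsq_nonneg _

lemma cs (u v : Fin d → ℂ) : Complex.normSq (star u ⬝ᵥ v) ≤ nsq u * nsq v := by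
  set u' : EuclideanSpace ℂ (Fin d) := (WithLp.equiv 2 (Fin d → ℂ)).symm u
  set v' : EuclideanSpace ℂ (Fin d) := (WithLp.equiv 2 (Fin d → ℂ)).symm v
  have h1 : star u ⬝ᵥ v = inner ℂ u' v' := by
    simp [dotProduct, PiLp.inner_apply, RCLike.inner_apply, u', v', mul_comm]
  have hu : nsq u = ‖u'‖ ^ 2 := by
    rw [EuclideanSpace.norm_eq, Real.sq_sqrt (Finset.sum_nonneg fun _ _ => sq_nonneg _)]
    simp [nsq, Complex.normSq_eq_norm_sq, u']
  have hv : nsq v = ‖v'‖ ^ 2 := by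
    rw [EuclideanSpace.norm_eq, Real.sq_sqrt (Finset.sum_nonneg fun _ _ => sq_nonneg _)]
    simp [nsq, Complex.normSq_eq_norm_sq, v']
  have h2 := norm_inner_le_norm (𝕜 := ℂ) u' v'
  have h3 : Complex.normSq (star u ⬝ᵥ v) = ‖(inner ℂ u' v' : ℂ)‖ ^ 2 := by
    rw [h1, Complex.sq_norm]
  rw [h3, hu, hv]
  calc ‖(inner ℂ u' v' : ℂ)‖ ^ 2 ≤ (‖u'‖ * ‖v'‖) ^ 2 := by
        exact pow_le_pow_left₀ (norm_nonneg _) h2 2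
    _ = ‖u'‖ ^ 2 * ‖v'‖ ^ 2 := by ring

lemma nsq_smul (z : ℂ) (v : Fin d → ℂ) : nsq (z • v) = Complex.normSq z * nsq v := by
  simp [nsq, Complex.normSq_mul, Finset.mul_sum]

lemma dot_smul_self (c : ℂ) (v : Fin d → ℂ) :
    star (c • v) ⬝ᵥ (c • v) = ((Complex.normSq c : ℝ) : ℂ) * (star v ⬝ᵥ v) := by
  rw [star_smul, smul_dotProduct, dotProduct_smul, smul_eq_mul, smul_eq_mul,
    Complex.normSq_eq_conj_mul_self, Complex.star_def]
  ring

lemma vecMulVec_mulVec (w v u : Fin d → ℂ) : vecMulVec w v *ᵥ u = (v ⬝ᵥ u) • w := by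
  ext i
  simp [mulVec, vecMulVec_apply, dotProduct, Finset.mul_sum, mul_comm, mul_assoc, mul_left_comm]

lemma mul_vecMulVec (A : Matrix (Fin d) (Fin d) ℂ) (w v : Fin d → ℂ) :
    A * vecMulVec w v = vecMulVec (A *ᵥ w) v := by
  ext i j
  simp only [Matrix.mul_apply, vecMulVec_apply, mulVec, dotProduct, Finset.sum_mul]
  exact Finset.sum_congr rfl fun k _ => by ring

lemma vecMulVec_mul (w v : Fin d → ℂ) (A : Matrix (Fin d) (Fin d) ℂ) :
    vecMulVec w v * A = vecMulVec w (v ᵥ* A) := by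
  ext i j
  simp [Matrix.mul_apply, vecMulVec_apply, vecMul, dotProduct, Finset.mul_sum, mul_assoc]

lemma trace_vecMulVec (w v : Fin d → ℂ) : Matrix.trace (vecMulVec w v) = v ⬝ᵥ w := by
  simp [Matrix.trace, Matrix.diag, vecMulVec_apply, dotProduct, mul_comm]

lemma star_mulVec_dot (A : Matrix (Fin d) (Fin d) ℂ) (v u : Fin d → ℂ) :
    star (A *ᵥ v) ⬝ᵥ u = star v ⬝ᵥ (Aᴴ *ᵥ u) := by
  rw [Matrix.star_mulVec, ← Matrix.dotProduct_mulVec]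

lemma conj_dot (u v : Fin d → ℂ) :
    (starRingEnd ℂ) (star u ⬝ᵥ v) = star v ⬝ᵥ u := by
  simp [dotProduct, map_sum, mul_comm]

end StmtAux

namespace StmtAux
variable {d : ℕ}

lemma sum_mulVec {α : Type*} (s : Finset α) (f : α → Matrix (Fin d) (Fin d) ℂ) (v : Fin d → ℂ) :
    (∑ i ∈ s, f i) *ᵥ v = ∑ i ∈ s, f i *ᵥ v := by
  ext j
  simp [mulVec, dotProduct, Matrix.sum_apply, Finset.sum_mul]
  rw [Finset.sum_comm]

lemma dot_sum {α : Type*} (s : Finset α) (u : Fin d → ℂ) (f : α → Fin d → ℂ) :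
    u ⬝ᵥ (∑ i ∈ s, f i) = ∑ i ∈ s, u ⬝ᵥ f i := by
  simp [dotProduct, Finset.sum_apply, Finset.mul_sum]
  rw [Finset.sum_comm]

lemma sum_dot {α : Type*} (s : Finset α) (f : α → Fin d → ℂ) (u : Fin d → ℂ) :
    (∑ i ∈ s, f i) ⬝ᵥ u = ∑ i ∈ s, f i ⬝ᵥ u := by
  simp [dotProduct, Finset.sum_apply, Finset.sum_mul]
  rw [Finset.sum_comm]

section Proj
variable {ι : Type} [Fintype ι] [DecidableEq ι]
variable {P : ι → Matrix (Fin d) (Fin d) ℂ}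

lemma dot_P (hHerm : ∀ i, (P i).IsHermitian) (hIdem : ∀ i, P i * P i = P i)
    (i : ι) (v : Fin d → ℂ) :
    star v ⬝ᵥ (P i *ᵥ v) = (wt (P i) v : ℂ) := by
  rw [wt_eq, ← dot_self_eq, star_mulVec_dot, (hHerm i).eq, Matrix.mulVec_mulVec, hIdem i]

lemma dot_P_same (hHerm : ∀ i, (P i).IsHermitian) (hIdem : ∀ i, P i * P i = P i)
    (i : ι) (v w : Fin d → ℂ) :
    star (P i *ᵥ v) ⬝ᵥ (P i *ᵥ w) = star v ⬝ᵥ (P i *ᵥ w) := by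
  rw [star_mulVec_dot, (hHerm i).eq, Matrix.mulVec_mulVec, hIdem i]

lemma dot_P_orth (hHerm : ∀ i, (P i).IsHermitian) (hOrth : ∀ i j, i ≠ j → P i * P j = 0)
    {i j : ι} (hij : i ≠ j) (v w : Fin d → ℂ) :
    star (P i *ᵥ v) ⬝ᵥ (P j *ᵥ w) = 0 := by
  rw [star_mulVec_dot, (hHerm i).eq, Matrix.mulVec_mulVec, hOrth i j hij]
  simp [Matrix.zero_mulVec]

lemma sum_wt (hHerm : ∀ i, (P i).IsHermitian) (hIdem : ∀ i, P i * P i = P i)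
    (hSum : ∑ i, P i = 1) (v : Fin d → ℂ) :
    ∑ i, wt (P i) v = nsq v := by
  have h : ((∑ i, wt (P i) v : ℝ) : ℂ) = ((nsq v : ℝ) : ℂ) := by
    push_cast
    rw [← dot_self_eq]
    calc ∑ i, ((wt (P i) v : ℝ) : ℂ) = ∑ i, star v ⬝ᵥ (P i *ᵥ v) :=
          Finset.sum_congr rfl fun i _ => (dot_P hHerm hIdem i v).symm
      _ = star v ⬝ᵥ ((∑ i, P i) *ᵥ v) := by rw [sum_mulVec, dot_sum]
      _ = star v ⬝ᵥ v := by rw [hSum, Matrix.one_mulVec]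
  exact_mod_cast h

lemma commP (E : ι → ℝ) (hE : Function.Injective E)
    (hIdem : ∀ i, P i * P i = P i) (hOrth : ∀ i j, i ≠ j → P i * P j = 0)
    (hSum : ∑ i, P i = 1)
    {H M : Matrix (Fin d) (Fin d) ℂ} (hSpec : H = ∑ i, (E i : ℂ) • P i)
    (hM : M * H = H * M) (i : ι) : M * P i = P i * M := by
  have hHP : ∀ k, H * P k = (E k : ℂ) • P k := by
    intro k
    rw [hSpec, Finset.sum_mul, Finset.sum_eq_single k]
    · rw [smul_mul_assoc, hIdem]
    · intro l _ hlk; rw [smul_mul_assoc, hOrth l k hlk, smul_zero]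
    · simp
  have hPH : ∀ j, P j * H = (E j : ℂ) • P j := by
    intro j
    rw [hSpec, Finset.mul_sum, Finset.sum_eq_single j]
    · rw [mul_smul_comm, hIdem]
    · intro l _ hlj; rw [mul_smul_comm, hOrth j l (Ne.symm hlj), smul_zero]
    · simp
  have key : ∀ j k, j ≠ k → P j * M * P k = 0 := by
    intro j k hjk
    have h1 : (E k : ℂ) • (P j * M * P k) = (E j : ℂ) • (P j * M * P k) := by
      calc (E k : ℂ) • (P j * M * P k) = P j * M * ((E k : ℂ) • P k) := by
            rw [mul_smul_comm]
        _ = P j * M * (H * P k) := by rw [hHP k]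
        _ = P j * (M * H) * P k := by simp only [Matrix.mul_assoc]
        _ = P j * (H * M) * P k := by rw [hM]
        _ = (P j * H) * M * P k := by simp only [Matrix.mul_assoc]
        _ = ((E j : ℂ) • P j) * M * P k := by rw [hPH j]
        _ = (E j : ℂ) • (P j * M * P k) := by simp only [Matrix.smul_mul]
    have h2 : ((E k : ℂ) - (E j : ℂ)) • (P j * M * P k) = 0 := by
      rw [sub_smul, h1, sub_self]
    have h3 : ((E k : ℂ) - (E j : ℂ)) ≠ 0 := by
      intro h
      apply hjk
      exact (hE (by exact_mod_cast sub_eq_zero.mp h)).symm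
    exact (smul_eq_zero.mp h2).resolve_left h3
  have hl : M * P i = P i * (M * P i) :=
    calc M * P i = 1 * (M * P i) := (Matrix.one_mul _).symm
      _ = (∑ j, P j) * (M * P i) := by rw [hSum]
      _ = ∑ j, P j * (M * P i) := Finset.sum_mul _ _ _
      _ = P i * (M * P i) := Finset.sum_eq_single_of_mem i (Finset.mem_univ i)
          (fun j _ hji => by rw [← Matrix.mul_assoc]; exact key j i hji)
  have hr : P i * M = (P i * M) * P i :=
    calc P i * M = (P i * M) * 1 := (Matrix.mul_one _).symm
      _ = (P i * M) * ∑ j, P j := by rw [hSum]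
      _ = ∑ j, (P i * M) * P j := Finset.mul_sum _ _ _
      _ = (P i * M) * P i := Finset.sum_eq_single_of_mem i (Finset.mem_univ i)
          (fun j _ hji => key i j (Ne.symm hji))
  rw [hl, ← Matrix.mul_assoc, ← hr]

end Proj

lemma key1 (M : Matrix (Fin d) (Fin d) ℂ) (φ ψ : Fin d → ℂ) :
    star ψ ⬝ᵥ ((M * vecMulVec φ (star φ) * Mᴴ) *ᵥ ψ)
      = ((Complex.normSq (star ψ ⬝ᵥ (M *ᵥ φ)) : ℝ) : ℂ) := by
  rw [mul_vecMulVec, vecMulVec_mul, ← Matrix.star_mulVec, vecMulVec_mulVec]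
  rw [dotProduct_smul]
  rw [Complex.normSq_eq_conj_mul_self, conj_dot]
  rw [smul_eq_mul]

lemma key2 (M : Matrix (Fin d) (Fin d) ℂ) (φ : Fin d → ℂ) :
    Matrix.trace (M * vecMulVec φ (star φ) * Mᴴ) = ((nsq (M *ᵥ φ) : ℝ) : ℂ) := by
  rw [mul_vecMulVec, vecMulVec_mul, ← Matrix.star_mulVec, trace_vecMulVec, dot_self_eq]

end StmtAux

open StmtAux

/-- **Ultimate fidelity of probabilistic energy-preserving operations.** With `H` Hermitian
(spectral projections `P i`), unit vectors `φ, ψ`, `p_E = ‖P_E φ‖²`, `q_E = ‖P_E ψ‖²`: every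
energy-preserving quantum operation with nonzero success probability on `φ` has normalized
fidelity at most `F_max = ∑_{E ∈ Sp(φ) ∩ Sp(ψ)} q_E`, and if `Sp(φ) ∩ Sp(ψ) ≠ ∅` the bound is
attained by a single Kraus operator commuting with `H`. -/

theorem stmt_10 {d : ℕ} {ι : Type} [Fintype ι] [DecidableEq ι]
    (H : Matrix (Fin d) (Fin d) ℂ) (hH : H.IsHermitian)
    (E : ι → ℝ) (hE : Function.Injective E)
    (P : ι → Matrix (Fin d) (Fin d) ℂ)
    (hHerm : ∀ i, (P i).IsHermitian)
    (hIdem : ∀ i, P i * P i = P i)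
    (hOrth : ∀ i j, i ≠ j → P i * P j = 0)
    (hSum : ∑ i, P i = 1)
    (hSpec : H = ∑ i, (E i : ℂ) • P i)
    (φ ψ : Fin d → ℂ) (hφ : star φ ⬝ᵥ φ = 1) (hψ : star ψ ⬝ᵥ ψ = 1) :
    (∀ (K : ℕ) (M : Fin K → Matrix (Fin d) (Fin d) ℂ),
      ((1 : Matrix (Fin d) (Fin d) ℂ) - ∑ k, (M k)ᴴ * M k).PosSemidef →
      (∀ k, M k * H = H * M k) →
      0 < Matrix.trace (∑ k, M k * vecMulVec φ (star φ) * (M k)ᴴ) →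
      star ψ ⬝ᵥ ((∑ k, M k * vecMulVec φ (star φ) * (M k)ᴴ) *ᵥ ψ) /
          Matrix.trace (∑ k, M k * vecMulVec φ (star φ) * (M k)ᴴ) ≤
        ((∑ i ∈ Finset.univ.filter (fun i => wt (P i) φ ≠ 0 ∧ wt (P i) ψ ≠ 0),
            wt (P i) ψ : ℝ) : ℂ)) ∧
    ((Finset.univ.filter (fun i => wt (P i) φ ≠ 0 ∧ wt (P i) ψ ≠ 0)).Nonempty →
      ∃ M₀ : Matrix (Fin d) (Fin d) ℂ,
        ((1 : Matrix (Fin d) (Fin d) ℂ) - M₀ᴴ * M₀).PosSemidef ∧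
        M₀ * H = H * M₀ ∧
        0 < Matrix.trace (M₀ * vecMulVec φ (star φ) * M₀ᴴ) ∧
        star ψ ⬝ᵥ ((M₀ * vecMulVec φ (star φ) * M₀ᴴ) *ᵥ ψ) /
            Matrix.trace (M₀ * vecMulVec φ (star φ) * M₀ᴴ) =
          ((∑ i ∈ Finset.univ.filter (fun i => wt (P i) φ ≠ 0 ∧ wt (P i) ψ ≠ 0),
              wt (P i) ψ : ℝ) : ℂ)) := by
  classical
  set S := Finset.univ.filter (fun i => wt (P i) φ ≠ 0 ∧ wt (P i) ψ ≠ 0) with hSdef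
  set F : ℝ := ∑ i ∈ S, wt (P i) ψ with hFdef
  set Q : Matrix (Fin d) (Fin d) ℂ := ∑ i ∈ S, P i with hQdef
  have hPv0 : ∀ (v : Fin d → ℂ) i, wt (P i) v = 0 → P i *ᵥ v = 0 := by
    intro v i h
    exact nsq_eq_zero (by rw [← wt_eq]; exact h)
  have hQψ : nsq (Q *ᵥ ψ) = F := by
    have h : ((nsq (Q *ᵥ ψ) : ℝ) : ℂ) = ((F : ℝ) : ℂ) := by
      rw [← dot_self_eq, hQdef, sum_mulVec, star_sum, sum_dot]
      have : ∀ i ∈ S, star (P i *ᵥ ψ) ⬝ᵥ (∑ j ∈ S, P j *ᵥ ψ) = ((wt (P i) ψ : ℝ) : ℂ) := by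
        intro i hi
        rw [dot_sum, Finset.sum_eq_single_of_mem i hi
          (fun j _ hji => dot_P_orth hHerm hOrth (Ne.symm hji) ψ ψ)]
        rw [dot_P_same hHerm hIdem, dot_P hHerm hIdem]
      rw [Finset.sum_congr rfl this]
      push_cast [hFdef]
      rfl
    exact_mod_cast h
  have hQdot : star ψ ⬝ᵥ (Q *ᵥ ψ) = ((F : ℝ) : ℂ) := by
    rw [hQdef, sum_mulVec, dot_sum]
    rw [Finset.sum_congr rfl (fun i _ => dot_P hHerm hIdem i ψ)]
    push_cast [hFdef]
    rfl
  have hFnn : 0 ≤ F := Finset.sum_nonneg fun i _ => wt_nonneg _ _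
  have hnsqψ : nsq ψ = 1 := by
    have := dot_self_eq ψ
    rw [hψ] at this
    exact_mod_cast this.symm
  have hqle1 : ∀ i, wt (P i) ψ ≤ 1 := by
    intro i
    rw [← hnsqψ, ← sum_wt hHerm hIdem hSum ψ]
    exact Finset.single_le_sum (fun j _ => wt_nonneg _ _) (Finset.mem_univ i)
  constructor
  · -- Part 1: upper bound
    intro K M hPSD hcomm hpos
    have hMP : ∀ k i, M k * P i = P i * M k := fun k i =>
      commP E hE hIdem hOrth hSum hSpec (hcomm k) i
    have hred : ∀ k, star ψ ⬝ᵥ (M k *ᵥ φ) = star (Q *ᵥ ψ) ⬝ᵥ (M k *ᵥ φ) := by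
      intro k
      have expand : star ψ ⬝ᵥ (M k *ᵥ φ) = ∑ i, star (P i *ᵥ ψ) ⬝ᵥ (M k *ᵥ φ) := by
        conv_lhs => rw [← Matrix.one_mulVec ψ, ← hSum, sum_mulVec]
        rw [star_sum, sum_dot]
      rw [expand, hQdef, sum_mulVec, star_sum, sum_dot]
      symm
      apply Finset.sum_subset (Finset.filter_subset _ _)
      intro i _ hiS
      by_cases hq : wt (P i) ψ = 0
      · rw [hPv0 ψ i hq]
        simp
      · have hp : wt (P i) φ = 0 := by
          by_contra hp
          exact hiS (Finset.mem_filter.mpr ⟨Finset.mem_univ i, hp, hq⟩)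
        rw [star_mulVec_dot, (hHerm i).eq, Matrix.mulVec_mulVec, ← hMP k i,
          ← Matrix.mulVec_mulVec, hPv0 φ i hp, Matrix.mulVec_zero, dotProduct_zero]
    have hnum : star ψ ⬝ᵥ ((∑ k, M k * vecMulVec φ (star φ) * (M k)ᴴ) *ᵥ ψ)
        = (((∑ k, Complex.normSq (star ψ ⬝ᵥ (M k *ᵥ φ))) : ℝ) : ℂ) := by
      rw [StmtAux.sum_mulVec, dot_sum]
      push_cast
      exact Finset.sum_congr rfl fun k _ => key1 (M k) φ ψ
    have hden : Matrix.trace (∑ k, M k * vecMulVec φ (star φ) * (M k)ᴴ)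
        = (((∑ k, nsq (M k *ᵥ φ)) : ℝ) : ℂ) := by
      rw [Matrix.trace_sum]
      push_cast
      exact Finset.sum_congr rfl fun k _ => key2 (M k) φ
    set n : ℝ := ∑ k, Complex.normSq (star ψ ⬝ᵥ (M k *ᵥ φ)) with hn
    set t : ℝ := ∑ k, nsq (M k *ᵥ φ) with htdef
    have ht : 0 < t := by
      rw [hden] at hpos
      exact Complex.zero_lt_real.mp hpos
    have hle : n ≤ F * t := by
      rw [htdef, Finset.mul_sum, hn]
      apply Finset.sum_le_sum
      intro k _
      rw [hred k]
      calc Complex.normSq (star (Q *ᵥ ψ) ⬝ᵥ (M k *ᵥ φ))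
          ≤ nsq (Q *ᵥ ψ) * nsq (M k *ᵥ φ) := cs _ _
        _ = F * nsq (M k *ᵥ φ) := by rw [hQψ]
    rw [hnum, hden, ← Complex.ofReal_div, Complex.real_le_real, div_le_iff₀ ht]
    exact hle
  · -- Part 2: attainment
    intro hne
    have hSpos : ∀ i ∈ S, 0 < wt (P i) φ := by
      intro i hi
      exact lt_of_le_of_ne (wt_nonneg _ _) (Ne.symm (Finset.mem_filter.mp hi).2.1)
    have hSposψ : ∀ i ∈ S, 0 < wt (P i) ψ := by
      intro i hi
      exact lt_of_le_of_ne (wt_nonneg _ _) (Ne.symm (Finset.mem_filter.mp hi).2.2)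
    have hFpos : 0 < F := Finset.sum_pos (fun i hi => hSposψ i hi) hne
    set pm : ℝ := S.inf' hne (fun i => wt (P i) φ) with hpmdef
    have hpm_pos : 0 < pm := by
      rw [hpmdef, Finset.lt_inf'_iff]
      exact fun i hi => hSpos i hi
    have hpm_le : ∀ i ∈ S, pm ≤ wt (P i) φ := fun i hi => Finset.inf'_le _ hi
    set t : ℝ := Real.sqrt pm with htdef
    have ht : 0 < t := Real.sqrt_pos.mpr hpm_pos
    have ht2 : t ^ 2 = pm := Real.sq_sqrt hpm_pos.le
    set M₀ : Matrix (Fin d) (Fin d) ℂ :=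
      ∑ i ∈ S, ((t / wt (P i) φ : ℝ) : ℂ) • vecMulVec (P i *ᵥ ψ) (star (P i *ᵥ φ)) with hM₀
    have factA : ∀ x : Fin d → ℂ, M₀ *ᵥ x
        = ∑ i ∈ S, ((((t / wt (P i) φ : ℝ) : ℂ) * (star (P i *ᵥ φ) ⬝ᵥ x)) • (P i *ᵥ ψ)) := by
      intro x
      rw [hM₀, StmtAux.sum_mulVec]
      refine Finset.sum_congr rfl fun i _ => ?_
      rw [Matrix.smul_mulVec, vecMulVec_mulVec, smul_smul]
    have hdotφ : ∀ i, star (P i *ᵥ φ) ⬝ᵥ φ = ((wt (P i) φ : ℝ) : ℂ) := by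
      intro i
      rw [← conj_dot φ (P i *ᵥ φ), dot_P hHerm hIdem, Complex.conj_ofReal]
    have factB : M₀ *ᵥ φ = ((t : ℝ) : ℂ) • (Q *ᵥ ψ) := by
      rw [factA φ, hQdef, StmtAux.sum_mulVec, Finset.smul_sum]
      refine Finset.sum_congr rfl fun i hi => ?_
      rw [hdotφ i, ← Complex.ofReal_mul, div_mul_cancel₀ _ (ne_of_gt (hSpos i hi))]
    -- commutation with each P j
    have factC : ∀ j, M₀ * P j = P j * M₀ := by
      intro j
      have term : ∀ i ∈ S,
          vecMulVec (P i *ᵥ ψ) (star (P i *ᵥ φ)) * P j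
            = P j * vecMulVec (P i *ᵥ ψ) (star (P i *ᵥ φ)) := by
        intro i _
        rw [StmtAux.vecMulVec_mul, mul_vecMulVec]
        have h1 : star (P i *ᵥ φ) ᵥ* P j = star ((P j * P i) *ᵥ φ) := by
          conv_rhs => rw [← Matrix.mulVec_mulVec, Matrix.star_mulVec, (hHerm j).eq]
        have h2 : P j *ᵥ (P i *ᵥ ψ) = (P j * P i) *ᵥ ψ := Matrix.mulVec_mulVec ψ (P j) (P i)
        rw [h1, h2]
        by_cases hji : j = i
        · subst hji
          rw [hIdem j]
        · rw [hOrth j i hji]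
          ext a b
          simp [vecMulVec_apply, Matrix.zero_mulVec]
      rw [hM₀, Finset.sum_mul, Finset.mul_sum]
      refine Finset.sum_congr rfl fun i hi => ?_
      rw [smul_mul_assoc, mul_smul_comm, term i hi]
    have hcommH : M₀ * H = H * M₀ := by
      rw [hSpec, Finset.mul_sum, Finset.sum_mul]
      refine Finset.sum_congr rfl fun j _ => ?_
      rw [mul_smul_comm, smul_mul_assoc, factC j]
    -- success probability
    have hnsqM₀φ : nsq (M₀ *ᵥ φ) = t ^ 2 * F := by
      rw [factB, nsq_smul, Complex.normSq_ofReal, hQψ]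
      ring
    have htrace : Matrix.trace (M₀ * vecMulVec φ (star φ) * M₀ᴴ) = (((t ^ 2 * F) : ℝ) : ℂ) := by
      rw [key2, hnsqM₀φ]
    have htrace_pos : (0 : ℂ) < Matrix.trace (M₀ * vecMulVec φ (star φ) * M₀ᴴ) := by
      rw [htrace]
      exact Complex.zero_lt_real.mpr (by positivity)
    -- fidelity
    have hc : star ψ ⬝ᵥ (M₀ *ᵥ φ) = (((t * F) : ℝ) : ℂ) := by
      rw [factB, dotProduct_smul, hQdot, smul_eq_mul, ← Complex.ofReal_mul]
    have hfid : star ψ ⬝ᵥ ((M₀ * vecMulVec φ (star φ) * M₀ᴴ) *ᵥ ψ) /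
        Matrix.trace (M₀ * vecMulVec φ (star φ) * M₀ᴴ) = ((F : ℝ) : ℂ) := by
      rw [key1, hc, htrace, Complex.normSq_ofReal, ← Complex.ofReal_div]
      congr 1
      field_simp
    -- PSD
    have hPSD : ((1 : Matrix (Fin d) (Fin d) ℂ) - M₀ᴴ * M₀).PosSemidef := by
      rw [Matrix.posSemidef_iff_dotProduct_mulVec]
      constructor
      · exact (Matrix.isHermitian_one).sub (Matrix.isHermitian_conjTranspose_mul_self M₀)
      · intro x
        have hcontr : nsq (M₀ *ᵥ x) ≤ nsq x := by
          have hexp : ((nsq (M₀ *ᵥ x) : ℝ) : ℂ)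
              = ∑ i ∈ S, ((Complex.normSq (((t / wt (P i) φ : ℝ) : ℂ)
                  * (star (P i *ᵥ φ) ⬝ᵥ x)) : ℝ) : ℂ) * ((wt (P i) ψ : ℝ) : ℂ) := by
            rw [← dot_self_eq, factA x, star_sum, sum_dot]
            refine Finset.sum_congr rfl fun i hi => ?_
            rw [dot_sum, Finset.sum_eq_single_of_mem i hi (fun j _ hji => by
              rw [star_smul, smul_dotProduct, dotProduct_smul,
                dot_P_orth hHerm hOrth (Ne.symm hji) ψ ψ]
              simp)]
            rw [dot_smul_self, dot_P_same hHerm hIdem, dot_P hHerm hIdem]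
          have hreal : nsq (M₀ *ᵥ x)
              = ∑ i ∈ S, Complex.normSq (((t / wt (P i) φ : ℝ) : ℂ)
                  * (star (P i *ᵥ φ) ⬝ᵥ x)) * wt (P i) ψ := by
            exact_mod_cast hexp
          have hterm : ∀ i ∈ S, Complex.normSq (((t / wt (P i) φ : ℝ) : ℂ)
              * (star (P i *ᵥ φ) ⬝ᵥ x)) * wt (P i) ψ ≤ wt (P i) x := by
            intro i hi
            have hp : 0 < wt (P i) φ := hSpos i hi
            have hdx : star (P i *ᵥ φ) ⬝ᵥ x = star (P i *ᵥ φ) ⬝ᵥ (P i *ᵥ x) := by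
              rw [star_mulVec_dot, (hHerm i).eq, dot_P_same hHerm hIdem]
            have hA : Complex.normSq (star (P i *ᵥ φ) ⬝ᵥ x) ≤ wt (P i) φ * wt (P i) x := by
              rw [hdx, wt_eq, wt_eq]
              exact cs _ _
            have hone : t ^ 2 * wt (P i) ψ / wt (P i) φ ≤ 1 := by
              rw [div_le_one hp]
              calc t ^ 2 * wt (P i) ψ = pm * wt (P i) ψ := by rw [ht2]
                _ ≤ pm * 1 := mul_le_mul_of_nonneg_left (hqle1 i) hpm_pos.le
                _ = pm := mul_one _
                _ ≤ wt (P i) φ := hpm_le i hi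
            have hnz : Complex.normSq (((t / wt (P i) φ : ℝ) : ℂ)
                  * (star (P i *ᵥ φ) ⬝ᵥ x))
                = (t / wt (P i) φ) * (t / wt (P i) φ)
                    * Complex.normSq (star (P i *ᵥ φ) ⬝ᵥ x) := by
              simp only [Complex.normSq_mul, Complex.normSq_ofReal]
            calc Complex.normSq (((t / wt (P i) φ : ℝ) : ℂ)
                  * (star (P i *ᵥ φ) ⬝ᵥ x)) * wt (P i) ψ
                = ((t / wt (P i) φ) * (t / wt (P i) φ) * wt (P i) ψ)
                    * Complex.normSq (star (P i *ᵥ φ) ⬝ᵥ x) := by rw [hnz]; ring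
              _ ≤ ((t / wt (P i) φ) * (t / wt (P i) φ) * wt (P i) ψ)
                    * (wt (P i) φ * wt (P i) x) := by
                  apply mul_le_mul_of_nonneg_left hA
                  have hq0 := (hSposψ i hi).le
                  positivity
              _ = (t ^ 2 * wt (P i) ψ / wt (P i) φ) * wt (P i) x := by
                  field_simp
              _ ≤ 1 * wt (P i) x := mul_le_mul_of_nonneg_right hone (wt_nonneg _ _)
              _ = wt (P i) x := one_mul _
          calc nsq (M₀ *ᵥ x)
              = ∑ i ∈ S, Complex.normSq (((t / wt (P i) φ : ℝ) : ℂ)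
                  * (star (P i *ᵥ φ) ⬝ᵥ x)) * wt (P i) ψ := hreal
            _ ≤ ∑ i ∈ S, wt (P i) x := Finset.sum_le_sum hterm
            _ ≤ ∑ i, wt (P i) x := Finset.sum_le_sum_of_subset_of_nonneg
                (Finset.filter_subset _ _) (fun i _ _ => wt_nonneg _ _)
            _ = nsq x := sum_wt hHerm hIdem hSum x
        have hform : star x ⬝ᵥ (((1 : Matrix (Fin d) (Fin d) ℂ) - M₀ᴴ * M₀) *ᵥ x)
            = (((nsq x - nsq (M₀ *ᵥ x)) : ℝ) : ℂ) := by
          rw [Matrix.sub_mulVec, Matrix.one_mulVec, dotProduct_sub,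
            ← Matrix.mulVec_mulVec, ← star_mulVec_dot, dot_self_eq, dot_self_eq]
          push_cast
          ring
        rw [hform]
        exact Complex.zero_le_real.mpr (by linarith)
    exact ⟨M₀, hPSD, hcommH, htrace_pos, hfid⟩
end
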